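/- arXiv:2401.07924 — 9 statements merged into one kernel-verified Lean document; each statement's English description precedes it below -/
import Mathlib

section
/- For every n ≥ 2, the cactus group J_n is isomorphic to the group presented by generators x_2, x_3, …, x_n subject to the relations: x_i² = 1 for 2 ≤ i ≤ n; (x_k x_i x_k x_j)² = 1 for all i, j, k with 4 ≤ i + j ≤ k ≤ n and 2 ≤ i ≤ j; and x_k x_{i+j} x_j x_{i+j} = x_{k−i} x_j x_{k−i} x_k for all i, j, k with 3 ≤ i + j < k ≤ n, 1 ≤ i, 2 ≤ j and i + j ≤ k − i. Moreover there is such an isomorphism sending x_i to σ_{1,i} for each 2 ≤ i ≤ n. -/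
/-- Generators of the cactus group `J n`: pairs `(p, q)` with `1 ≤ p < q ≤ n`. -/
abbrev CactusGen (n : ℕ) := {pq : ℕ × ℕ // 1 ≤ pq.1 ∧ pq.1 < pq.2 ∧ pq.2 ≤ n}

/-- The defining relators of the standard presentation of the cactus group `J n`:
`σ_{p,q}² = 1`; `σ_{p,q}σ_{r,s} = σ_{r,s}σ_{p,q}` when `[p,q] ∩ [r,s] = ∅`;
and `σ_{p,q}σ_{r,s} = σ_{p+q-s,p+q-r}σ_{p,q}` when `[r,s] ⊆ [p,q]`. -/
def cactusRels (n : ℕ) : Set (FreeGroup (CactusGen n)) :=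
  { w | (∃ g : CactusGen n, w = FreeGroup.of g ^ 2) ∨
    (∃ g h : CactusGen n, (g.1.2 < h.1.1 ∨ h.1.2 < g.1.1) ∧
      w = FreeGroup.of g * FreeGroup.of h * (FreeGroup.of h * FreeGroup.of g)⁻¹) ∨
    (∃ g h k : CactusGen n, g.1.1 ≤ h.1.1 ∧ h.1.2 ≤ g.1.2 ∧
      k.1.1 = g.1.1 + g.1.2 - h.1.2 ∧ k.1.2 = g.1.1 + g.1.2 - h.1.1 ∧
      w = FreeGroup.of g * FreeGroup.of h * (FreeGroup.of k * FreeGroup.of g)⁻¹) }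

/-- The cactus group `J n`, as a presented group. -/
abbrev CactusGroup (n : ℕ) := PresentedGroup (cactusRels n)

/-- The generator `σ_{p,q}` of the cactus group `J n` (junk value `1` for invalid indices). -/
def cactusσ (n p q : ℕ) : CactusGroup n :=
  if h : 1 ≤ p ∧ p < q ∧ q ≤ n then PresentedGroup.of ⟨(p, q), h⟩ else 1

/-- The relators of the minimal presentation of the cactus group, on generators
`x_i = σ_{1,i}` for `2 ≤ i ≤ n`. -/
def cactusMinRels (n : ℕ) : Set (FreeGroup {i : ℕ // 2 ≤ i ∧ i ≤ n}) :=
  { w | (∃ g : {i : ℕ // 2 ≤ i ∧ i ≤ n}, w = FreeGroup.of g ^ 2) ∨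
    (∃ gi gj gk : {i : ℕ // 2 ≤ i ∧ i ≤ n},
      4 ≤ gi.1 + gj.1 ∧ gi.1 + gj.1 ≤ gk.1 ∧ 2 ≤ gi.1 ∧ gi.1 ≤ gj.1 ∧
      w = (FreeGroup.of gk * FreeGroup.of gi * FreeGroup.of gk * FreeGroup.of gj) ^ 2) ∨
    (∃ (i j : ℕ) (gk gij gj gki : {i : ℕ // 2 ≤ i ∧ i ≤ n}),
      3 ≤ i + j ∧ i + j < gk.1 ∧ 1 ≤ i ∧ 2 ≤ j ∧ i + j ≤ gk.1 - i ∧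
      gij.1 = i + j ∧ gj.1 = j ∧ gki.1 = gk.1 - i ∧
      w = FreeGroup.of gk * FreeGroup.of gij * FreeGroup.of gj * FreeGroup.of gij *
          (FreeGroup.of gki * FreeGroup.of gj * FreeGroup.of gki * FreeGroup.of gk)⁻¹) }

namespace CactusAux

lemma rel_one {α : Type*} {rels : Set (FreeGroup α)} {r : FreeGroup α} (h : r ∈ rels) :
    PresentedGroup.mk rels r = 1 :=
  (QuotientGroup.eq_one_iff r).mpr (Subgroup.subset_normalClosure h)

variable {n : ℕ}

/-! ### The minimal presented group -/

/-- Total generator function for the minimal presentation. -/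
noncomputable def X (n m : ℕ) : PresentedGroup (cactusMinRels n) :=
  if h : 2 ≤ m ∧ m ≤ n then PresentedGroup.of ⟨m, h⟩ else 1

lemma X_eq (m : ℕ) (h : 2 ≤ m ∧ m ≤ n) :
    X n m = PresentedGroup.of ⟨m, h⟩ := dif_pos h

lemma X_sq (m : ℕ) : X n m * X n m = 1 := by
  unfold X
  split
  · rename_i h
    have : ((PresentedGroup.of ⟨m, h⟩ : PresentedGroup (cactusMinRels n))) ^ 2 = 1 := by
      have := rel_one (rels := cactusMinRels n)
        (r := FreeGroup.of (⟨m, h⟩ : {i : ℕ // 2 ≤ i ∧ i ≤ n}) ^ 2)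
        (Or.inl ⟨⟨m, h⟩, rfl⟩)
      rw [map_pow] at this
      exact this
    rwa [pow_two] at this
  · simp

lemma X_cancel (m : ℕ) (z : PresentedGroup (cactusMinRels n)) :
    X n m * (X n m * z) = z := by
  rw [← mul_assoc, X_sq, one_mul]

lemma X_inv (m : ℕ) : (X n m)⁻¹ = X n m :=
  inv_eq_of_mul_eq_one_right (X_sq m)

/-- The minimal relation of the second type, in equational form. -/
lemma minrel2 (i j k : ℕ) (hi : 2 ≤ i) (hij : i ≤ j) (hjk : i + j ≤ k) (hk : k ≤ n) :
    X n k * X n i * X n k * X n j = X n j * (X n k * X n i * X n k) := by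
  have hin : 2 ≤ i ∧ i ≤ n := ⟨hi, by omega⟩
  have hjn : 2 ≤ j ∧ j ≤ n := ⟨by omega, by omega⟩
  have hkn : 2 ≤ k ∧ k ≤ n := ⟨by omega, hk⟩
  have hr := rel_one (rels := cactusMinRels n)
    (r := (FreeGroup.of (⟨k, hkn⟩ : {i : ℕ // 2 ≤ i ∧ i ≤ n}) * FreeGroup.of ⟨i, hin⟩ *
      FreeGroup.of ⟨k, hkn⟩ * FreeGroup.of ⟨j, hjn⟩) ^ 2)
    (Or.inr (Or.inl ⟨⟨i, hin⟩, ⟨j, hjn⟩, ⟨k, hkn⟩, (by omega : 4 ≤ i + j),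
      (by omega : i + j ≤ k), hi, hij, rfl⟩))
  rw [map_pow, map_mul, map_mul, map_mul] at hr
  rw [X_eq i hin, X_eq j hjn, X_eq k hkn]
  set a := (PresentedGroup.of ⟨k, hkn⟩ : PresentedGroup (cactusMinRels n)) *
    PresentedGroup.of ⟨i, hin⟩ * PresentedGroup.of ⟨k, hkn⟩ * PresentedGroup.of ⟨j, hjn⟩ with ha
  have h1 : a = a⁻¹ := by
    have := hr
    rw [pow_two] at this
    exact eq_inv_of_mul_eq_one_left this
  calc a = a⁻¹ := h1
    _ = _ := by
        rw [ha]
        simp only [mul_inv_rev]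
        rw [← X_eq i hin, ← X_eq j hjn, ← X_eq k hkn, X_inv, X_inv, X_inv]
        group

/-- Symmetric form of the commuting relation. -/
lemma comm2 (i j k : ℕ) (hi : 2 ≤ i) (hj : 2 ≤ j) (hjk : i + j ≤ k) (hk : k ≤ n) :
    X n k * X n i * X n k * X n j = X n j * (X n k * X n i * X n k) := by
  rcases le_total i j with h | h
  · exact minrel2 i j k hi h hjk hk
  · have h2 := minrel2 j i k hj h (by omega) hk
    -- from  Xk Xj Xk Xi = Xi (Xk Xj Xk), conjugate by Xk
    have h3 := congrArg (fun z => X n k * z * X n k) h2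
    have l : X n k * (X n k * X n j * X n k * X n i) * X n k =
        X n j * (X n k * X n i * X n k) := by
      simp only [mul_assoc, X_cancel, X_sq, mul_one, one_mul]
    have r : X n k * (X n i * (X n k * X n j * X n k)) * X n k =
        X n k * X n i * X n k * X n j := by
      simp only [mul_assoc, X_cancel, X_sq, mul_one, one_mul]
    rw [← l, ← r]
    exact h3.symm

/-- Core instance of the third relation. -/
lemma minrel3 (i j k : ℕ) (hi : 1 ≤ i) (hj : 2 ≤ j) (hijk : i + j < k)
    (hmid : i + j ≤ k - i) (hk : k ≤ n) :
    X n k * X n (i + j) * X n j * X n (i + j) =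
      X n (k - i) * X n j * X n (k - i) * X n k := by
  have hijn : 2 ≤ i + j ∧ i + j ≤ n := ⟨by omega, by omega⟩
  have hjn : 2 ≤ j ∧ j ≤ n := ⟨hj, by omega⟩
  have hkn : 2 ≤ k ∧ k ≤ n := ⟨by omega, hk⟩
  have hkin : 2 ≤ k - i ∧ k - i ≤ n := ⟨by omega, by omega⟩
  have hr := rel_one (rels := cactusMinRels n)
    (r := FreeGroup.of (⟨k, hkn⟩ : {i : ℕ // 2 ≤ i ∧ i ≤ n}) * FreeGroup.of ⟨i + j, hijn⟩ *
      FreeGroup.of ⟨j, hjn⟩ * FreeGroup.of ⟨i + j, hijn⟩ *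
      (FreeGroup.of ⟨k - i, hkin⟩ * FreeGroup.of ⟨j, hjn⟩ * FreeGroup.of ⟨k - i, hkin⟩ *
        FreeGroup.of ⟨k, hkn⟩)⁻¹)
    (Or.inr (Or.inr ⟨i, j, ⟨k, hkn⟩, ⟨i + j, hijn⟩, ⟨j, hjn⟩, ⟨k - i, hkin⟩,
      by omega, hijk, hi, hj, hmid, rfl, rfl, rfl, rfl⟩))
  simp only [map_mul, map_inv] at hr
  rw [mul_inv_eq_one] at hr
  rw [X_eq (i + j) hijn, X_eq j hjn, X_eq k hkn, X_eq (k - i) hkin]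
  exact hr

/-- Conjugation lemma: `X k (X m X j X m) X k = X (k+j-m) X j X (k+j-m)` for `j ≤ m ≤ k`. -/
lemma conjB (j m k : ℕ) (hj : 2 ≤ j) (hjm : j ≤ m) (hmk : m ≤ k) (hk : k ≤ n) :
    X n k * (X n m * X n j * X n m) * X n k =
      X n (k + j - m) * X n j * X n (k + j - m) := by
  rcases eq_or_lt_of_le hjm with rfl | hjm'
  · -- m = j
    have : k + j - j = k := by omega
    rw [this]
    calc X n k * (X n j * X n j * X n j) * X n k
        = X n k * ((X n j * X n j) * X n j) * X n k := by group
      _ = X n k * X n j * X n k := by rw [X_sq]; group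
  rcases eq_or_lt_of_le hmk with rfl | hmk'
  · -- m = k
    have : m + j - m = j := by omega
    rw [this]
    calc X n m * (X n m * X n j * X n m) * X n m
        = (X n m * X n m) * X n j * (X n m * X n m) := by group
      _ = X n j := by rw [X_sq]; group
      _ = (X n j * X n j) * X n j := by rw [X_sq]; group
      _ = X n j * X n j * X n j := by group
  -- j < m < k
  have core : ∀ m', j < m' → m' < k → 2 * m' ≤ k + j →
      X n k * (X n m' * X n j * X n m') * X n k =
        X n (k + j - m') * X n j * X n (k + j - m') := by
    intro m' h1 h2 h3
    have h4 := minrel3 (n := n) (m' - j) j k (by omega) hj (by omega) (by omega) hk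
    have e1 : m' - j + j = m' := by omega
    have e2 : k - (m' - j) = k + j - m' := by omega
    rw [e1, e2] at h4
    -- h4 : X k * X m' * X j * X m' = X t * X j * X t * X k  where t = k+j-m'
    calc X n k * (X n m' * X n j * X n m') * X n k
        = (X n k * X n m' * X n j * X n m') * X n k := by group
      _ = (X n (k + j - m') * X n j * X n (k + j - m') * X n k) * X n k := by rw [h4]
      _ = X n (k + j - m') * X n j * X n (k + j - m') * (X n k * X n k) := by group
      _ = _ := by rw [X_sq]; group
  rcases le_or_gt (2 * m) (k + j) with hc | hc
  · exact core m hjm' hmk' hc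
  · have h5 := core (k + j - m) (by omega) (by omega) (by omega)
    have e3 : k + j - (k + j - m) = m := by omega
    rw [e3] at h5
    -- h5 : X k * (X t * X j * X t) * X k = X m * X j * X m  where t = k+j-m
    calc X n k * (X n m * X n j * X n m) * X n k
        = X n k * (X n k * (X n (k + j - m) * X n j * X n (k + j - m)) * X n k) * X n k := by
          rw [h5]
      _ = (X n k * X n k) * (X n (k + j - m) * X n j * X n (k + j - m)) * (X n k * X n k) := by
          group
      _ = _ := by rw [X_sq]; group

/-- The image of the generator `σ_{p,q}` in the minimal presented group. -/
noncomputable def A (n p q : ℕ) : PresentedGroup (cactusMinRels n) :=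
  X n q * X n (q + 1 - p) * X n q

lemma A_sq (p q : ℕ) : A n p q * A n p q = 1 := by
  unfold A
  calc X n q * X n (q + 1 - p) * X n q * (X n q * X n (q + 1 - p) * X n q)
      = X n q * (X n (q + 1 - p) * ((X n q * X n q) * X n (q + 1 - p))) * X n q := by group
    _ = X n q * (X n (q + 1 - p) * X n (q + 1 - p)) * X n q := by rw [X_sq]; group
    _ = X n q * X n q := by rw [X_sq]; group
    _ = 1 := X_sq q

/-- Conjugation of a nested generator. -/
lemma A_conj (p q r s : ℕ) (hp : 1 ≤ p) (hpr : p ≤ r) (hrs : r < s) (hsq : s ≤ q)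
    (hq : q ≤ n) (hpq : p < q) :
    A n p q * A n r s * A n p q = A n (p + q - s) (p + q - r) := by
  set L := q + 1 - p with hL
  set M := s + 1 - r with hM
  have h1 := conjB (n := n) M s q (by omega) (by omega) hsq hq
  have h2 := conjB (n := n) M (q + M - s) L (by omega) (by omega) (by omega) (by omega)
  have h3 := conjB (n := n) M (L + M - (q + M - s)) q (by omega) (by omega) (by omega) hq
  have e1 : q + M - (L + M - (q + M - s)) = p + q - r := by omega
  rw [e1] at h3
  have e2 : p + q - r + 1 - (p + q - s) = M := by omega
  show X n q * X n L * X n q * (X n s * X n M * X n s) * (X n q * X n L * X n q) = _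
  rw [A, e2]
  calc X n q * X n L * X n q * (X n s * X n M * X n s) * (X n q * X n L * X n q)
      = X n q * (X n L * (X n q * (X n s * X n M * X n s) * X n q) * X n L) * X n q := by group
    _ = X n q * (X n L * (X n (q + M - s) * X n M * X n (q + M - s)) * X n L) * X n q := by
        rw [h1]
    _ = X n q * (X n (L + M - (q + M - s)) * X n M * X n (L + M - (q + M - s))) * X n q := by
        rw [h2]
    _ = X n (p + q - r) * X n M * X n (p + q - r) := h3

/-- Commutation of disjoint generators, for `s < p` (the other interval below). -/
lemma A_comm_core (p q r s : ℕ) (hr : 1 ≤ r) (hrs : r < s) (hsp : s < p) (hpq : p < q)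
    (hq : q ≤ n) :
    A n p q * A n r s * A n p q = A n r s := by
  set L := q + 1 - p with hL
  set M := s + 1 - r with hM
  have h1 := conjB (n := n) M s q (by omega) (by omega) (by omega) hq
  have h2 := comm2 (n := n) M L (q + M - s) (by omega) (by omega) (by omega) (by omega)
  -- h2 : X t X M X t * X L = X L * (X t X M X t)? comm2 gives X k X i X k X j = X j (X k X i X k)
  have h3 := conjB (n := n) M (q + M - s) q (by omega) (by omega) (by omega) hq
  have e1 : q + M - (q + M - s) = s := by omega
  rw [e1] at h3
  show X n q * X n L * X n q * (X n s * X n M * X n s) * (X n q * X n L * X n q) =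
    X n s * X n M * X n s
  calc X n q * X n L * X n q * (X n s * X n M * X n s) * (X n q * X n L * X n q)
      = X n q * (X n L * (X n q * (X n s * X n M * X n s) * X n q) * X n L) * X n q := by group
    _ = X n q * (X n L * (X n (q + M - s) * X n M * X n (q + M - s)) * X n L) * X n q := by
        rw [h1]
    _ = X n q * (X n (q + M - s) * X n M * X n (q + M - s) * (X n L * X n L)) * X n q := by
        have h2' : X n (q + M - s) * X n M * X n (q + M - s) * X n L =
            X n L * (X n (q + M - s) * X n M * X n (q + M - s)) := h2
        rw [← mul_assoc, ← h2']
        group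
    _ = X n q * (X n (q + M - s) * X n M * X n (q + M - s)) * X n q := by rw [X_sq]; group
    _ = X n s * X n M * X n s := h3

/-! ### Relations in the cactus group -/

lemma crel1 (p q : ℕ) : cactusσ n p q * cactusσ n p q = 1 := by
  unfold cactusσ
  split
  · rename_i h
    have := rel_one (rels := cactusRels n)
      (r := FreeGroup.of (⟨(p, q), h⟩ : CactusGen n) ^ 2) (Or.inl ⟨⟨(p, q), h⟩, rfl⟩)
    rw [map_pow] at this
    rwa [pow_two] at this
  · simp

lemma σ_inv (p q : ℕ) : (cactusσ n p q)⁻¹ = cactusσ n p q :=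
  inv_eq_of_mul_eq_one_right (crel1 p q)

lemma σ_of (g : CactusGen n) : cactusσ n g.1.1 g.1.2 = PresentedGroup.of g := by
  rw [cactusσ, dif_pos g.2]

lemma crel2 (p q r s : ℕ) (hg : 1 ≤ p ∧ p < q ∧ q ≤ n) (hh : 1 ≤ r ∧ r < s ∧ s ≤ n)
    (hd : q < r ∨ s < p) :
    cactusσ n p q * cactusσ n r s = cactusσ n r s * cactusσ n p q := by
  have hr := rel_one (rels := cactusRels n)
    (r := FreeGroup.of (⟨(p, q), hg⟩ : CactusGen n) * FreeGroup.of ⟨(r, s), hh⟩ *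
      (FreeGroup.of (⟨(r, s), hh⟩ : CactusGen n) * FreeGroup.of ⟨(p, q), hg⟩)⁻¹)
    (Or.inr (Or.inl ⟨⟨(p, q), hg⟩, ⟨(r, s), hh⟩, hd, rfl⟩))
  simp only [map_mul, map_inv] at hr
  rw [mul_inv_eq_one] at hr
  rw [cactusσ, dif_pos hg, cactusσ, dif_pos hh]
  exact hr

lemma crel3 (p q r s : ℕ) (hg : 1 ≤ p ∧ p < q ∧ q ≤ n) (hh : 1 ≤ r ∧ r < s ∧ s ≤ n)
    (hpr : p ≤ r) (hsq : s ≤ q) :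
    cactusσ n p q * cactusσ n r s = cactusσ n (p + q - s) (p + q - r) * cactusσ n p q := by
  have hk : 1 ≤ p + q - s ∧ p + q - s < p + q - r ∧ p + q - r ≤ n := ⟨by omega, by omega, by omega⟩
  have hr := rel_one (rels := cactusRels n)
    (r := FreeGroup.of (⟨(p, q), hg⟩ : CactusGen n) * FreeGroup.of ⟨(r, s), hh⟩ *
      (FreeGroup.of (⟨(p + q - s, p + q - r), hk⟩ : CactusGen n) *
        FreeGroup.of ⟨(p, q), hg⟩)⁻¹)
    (Or.inr (Or.inr ⟨⟨(p, q), hg⟩, ⟨(r, s), hh⟩, ⟨(p + q - s, p + q - r), hk⟩,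
      hpr, hsq, rfl, rfl, rfl⟩))
  simp only [map_mul, map_inv] at hr
  rw [mul_inv_eq_one] at hr
  rw [cactusσ, dif_pos hg, cactusσ, dif_pos hh, cactusσ, dif_pos hk]
  exact hr

lemma σ_conj3 (p q r s : ℕ) (hg : 1 ≤ p ∧ p < q ∧ q ≤ n) (hh : 1 ≤ r ∧ r < s ∧ s ≤ n)
    (hpr : p ≤ r) (hsq : s ≤ q) :
    cactusσ n p q * cactusσ n r s * cactusσ n p q = cactusσ n (p + q - s) (p + q - r) := by
  rw [crel3 p q r s hg hh hpr hsq, mul_assoc, crel1, mul_one]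

end CactusAux

open CactusAux in
/-- For every `n ≥ 2`, the cactus group `J_n` is isomorphic to the group presented by
generators `x_2, …, x_n` subject to the relations `x_i² = 1` (for `2 ≤ i ≤ n`),
`(x_k x_i x_k x_j)² = 1` (for `4 ≤ i+j ≤ k ≤ n`, `2 ≤ i ≤ j`) and
`x_k x_{i+j} x_j x_{i+j} = x_{k-i} x_j x_{k-i} x_k` (for `3 ≤ i+j < k ≤ n`, `1 ≤ i`,
`2 ≤ j`, `i+j ≤ k-i`), via an isomorphism sending `x_i` to `σ_{1,i}`. -/
theorem cactus_minimal_presentation (n : ℕ) (hn : 2 ≤ n) :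
    ∃ e : PresentedGroup (cactusMinRels n) ≃* CactusGroup n,
      ∀ (i : ℕ) (h : 2 ≤ i ∧ i ≤ n),
        e (PresentedGroup.of ⟨i, h⟩) = cactusσ n 1 i := by
  -- the forward map
  have hfwd : ∀ r ∈ cactusMinRels n,
      FreeGroup.lift (fun g : {i : ℕ // 2 ≤ i ∧ i ≤ n} => cactusσ n 1 g.1) r = 1 := by
    intro r hr
    rcases hr with ⟨g, rfl⟩ | ⟨gi, gj, gk, h4, hik, hi2, hij, rfl⟩ |
      ⟨i, j, gk, gij, gj, gki, h3, hjk, hi1, hj2, hmid, hgij, hgj, hgki, rfl⟩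
    · simp only [map_pow, FreeGroup.lift_apply_of]
      rw [pow_two, crel1]
    · simp only [map_pow, map_mul, FreeGroup.lift_apply_of]
      obtain ⟨hi, hiN⟩ := gi.2
      obtain ⟨hj, hjN⟩ := gj.2
      obtain ⟨hk, hkN⟩ := gk.2
      set i := gi.1; set j := gj.1; set k := gk.1
      have key : cactusσ n 1 k * cactusσ n 1 i * cactusσ n 1 k =
          cactusσ n (1 + k - i) (1 + k - 1) := by
        rw [← σ_conj3 1 k 1 i ⟨le_refl 1, by omega, hkN⟩ ⟨le_refl 1, by omega, by omega⟩
          le_rfl (by omega)]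
      have hcomm : cactusσ n (1 + k - i) (1 + k - 1) * cactusσ n 1 j =
          cactusσ n 1 j * cactusσ n (1 + k - i) (1 + k - 1) := by
        apply crel2 _ _ _ _ ⟨by omega, by omega, by omega⟩ ⟨le_refl 1, by omega, by omega⟩
        right; omega
      rw [pow_two]
      calc cactusσ n 1 k * cactusσ n 1 i * cactusσ n 1 k * cactusσ n 1 j *
            (cactusσ n 1 k * cactusσ n 1 i * cactusσ n 1 k * cactusσ n 1 j)
          = (cactusσ n 1 k * cactusσ n 1 i * cactusσ n 1 k) * cactusσ n 1 j *
            ((cactusσ n 1 k * cactusσ n 1 i * cactusσ n 1 k) * cactusσ n 1 j) := by group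
        _ = cactusσ n (1 + k - i) (1 + k - 1) * cactusσ n 1 j *
            (cactusσ n (1 + k - i) (1 + k - 1) * cactusσ n 1 j) := by rw [key]
        _ = cactusσ n (1 + k - i) (1 + k - 1) * (cactusσ n 1 j *
            cactusσ n (1 + k - i) (1 + k - 1)) * cactusσ n 1 j := by group
        _ = cactusσ n (1 + k - i) (1 + k - 1) * (cactusσ n (1 + k - i) (1 + k - 1) *
            cactusσ n 1 j) * cactusσ n 1 j := by rw [hcomm]
        _ = (cactusσ n (1 + k - i) (1 + k - 1) * cactusσ n (1 + k - i) (1 + k - 1)) *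
            (cactusσ n 1 j * cactusσ n 1 j) := by group
        _ = 1 := by rw [crel1, crel1, one_mul]
    · simp only [map_mul, map_inv, FreeGroup.lift_apply_of]
      rw [mul_inv_eq_one]
      obtain ⟨hk, hkN⟩ := gk.2
      set k := gk.1
      rw [hgij, hgj, hgki]
      have s1 : cactusσ n 1 (i + j) * cactusσ n 1 j * cactusσ n 1 (i + j) =
          cactusσ n (1 + (i + j) - j) (1 + (i + j) - 1) :=
        σ_conj3 1 (i + j) 1 j ⟨le_rfl, by omega, by omega⟩ ⟨le_rfl, by omega, by omega⟩
          le_rfl (by omega)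
      have e1 : 1 + (i + j) - j = i + 1 := by omega
      have e1' : 1 + (i + j) - 1 = i + j := by omega
      rw [e1, e1'] at s1
      have s2 : cactusσ n 1 k * cactusσ n (i + 1) (i + j) * cactusσ n 1 k =
          cactusσ n (1 + k - (i + j)) (1 + k - (i + 1)) :=
        σ_conj3 1 k (i + 1) (i + j) ⟨le_rfl, by omega, hkN⟩ ⟨by omega, by omega, by omega⟩
          (by omega) (by omega)
      have s3 : cactusσ n 1 (k - i) * cactusσ n 1 j * cactusσ n 1 (k - i) =
          cactusσ n (1 + (k - i) - j) (1 + (k - i) - 1) :=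
        σ_conj3 1 (k - i) 1 j ⟨le_rfl, by omega, by omega⟩ ⟨le_rfl, by omega, by omega⟩
          le_rfl (by omega)
      have e2 : 1 + (k - i) - j = 1 + k - (i + j) := by omega
      have e2' : 1 + (k - i) - 1 = 1 + k - (i + 1) := by omega
      rw [e2, e2'] at s3
      calc cactusσ n 1 k * cactusσ n 1 (i + j) * cactusσ n 1 j * cactusσ n 1 (i + j)
          = cactusσ n 1 k * (cactusσ n 1 (i + j) * cactusσ n 1 j * cactusσ n 1 (i + j)) := by
            group
        _ = cactusσ n 1 k * cactusσ n (i + 1) (i + j) := by rw [s1]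
        _ = cactusσ n 1 k * cactusσ n (i + 1) (i + j) * (cactusσ n 1 k * cactusσ n 1 k) := by
            rw [crel1]; group
        _ = (cactusσ n 1 k * cactusσ n (i + 1) (i + j) * cactusσ n 1 k) * cactusσ n 1 k := by
            group
        _ = cactusσ n (1 + k - (i + j)) (1 + k - (i + 1)) * cactusσ n 1 k := by rw [s2]
        _ = (cactusσ n 1 (k - i) * cactusσ n 1 j * cactusσ n 1 (k - i)) * cactusσ n 1 k := by
            rw [s3]
        _ = _ := by group
  -- the backward map
  have hbwd : ∀ r ∈ cactusRels n,
      FreeGroup.lift (fun g : CactusGen n => A n g.1.1 g.1.2) r = 1 := by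
    intro r hr
    rcases hr with ⟨g, rfl⟩ | ⟨g, h, hd, rfl⟩ | ⟨g, h, k, h1, h2, h3, h4, rfl⟩
    · simp only [map_pow, FreeGroup.lift_apply_of]
      rw [pow_two, A_sq]
    · simp only [map_mul, map_inv, FreeGroup.lift_apply_of]
      rw [mul_inv_eq_one]
      obtain ⟨hg1, hg2, hg3⟩ := g.2
      obtain ⟨hh1, hh2, hh3⟩ := h.2
      have comm : A n g.1.1 g.1.2 * A n h.1.1 h.1.2 = A n h.1.1 h.1.2 * A n g.1.1 g.1.2 := by
        rcases hd with hd | hd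
        · -- g.2 < h.1 : g below h ; use A_comm_core with (p,q) := h, (r,s) := g
          have hc := A_comm_core h.1.1 h.1.2 g.1.1 g.1.2 hg1 hg2 hd hh2 hh3
          calc A n g.1.1 g.1.2 * A n h.1.1 h.1.2
              = (A n h.1.1 h.1.2 * A n h.1.1 h.1.2) * A n g.1.1 g.1.2 * A n h.1.1 h.1.2 := by
                rw [A_sq]; group
            _ = A n h.1.1 h.1.2 * (A n h.1.1 h.1.2 * A n g.1.1 g.1.2 * A n h.1.1 h.1.2) := by
                group
            _ = A n h.1.1 h.1.2 * A n g.1.1 g.1.2 := by rw [hc]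
        · have hc := A_comm_core g.1.1 g.1.2 h.1.1 h.1.2 hh1 hh2 hd hg2 hg3
          calc A n g.1.1 g.1.2 * A n h.1.1 h.1.2
              = (A n g.1.1 g.1.2 * A n h.1.1 h.1.2 * A n g.1.1 g.1.2) * A n g.1.1 g.1.2 := by
                rw [mul_assoc, mul_assoc, A_sq]; group
            _ = A n h.1.1 h.1.2 * A n g.1.1 g.1.2 := by rw [hc]
      exact comm
    · simp only [map_mul, map_inv, FreeGroup.lift_apply_of]
      rw [mul_inv_eq_one]
      obtain ⟨hg1, hg2, hg3⟩ := g.2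
      obtain ⟨hh1, hh2, hh3⟩ := h.2
      have hc := A_conj g.1.1 g.1.2 h.1.1 h.1.2 hg1 h1 hh2 h2 hg3 hg2
      have hk : A n k.1.1 k.1.2 = A n (g.1.1 + g.1.2 - h.1.2) (g.1.1 + g.1.2 - h.1.1) := by
        rw [h3, h4]
      calc A n g.1.1 g.1.2 * A n h.1.1 h.1.2
          = (A n g.1.1 g.1.2 * A n h.1.1 h.1.2 * A n g.1.1 g.1.2) * A n g.1.1 g.1.2 := by
            rw [mul_assoc, mul_assoc, A_sq]; group
        _ = A n (g.1.1 + g.1.2 - h.1.2) (g.1.1 + g.1.2 - h.1.1) * A n g.1.1 g.1.2 := by rw [hc]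
        _ = A n k.1.1 k.1.2 * A n g.1.1 g.1.2 := by rw [hk]
  let φ := PresentedGroup.toGroup hfwd
  let ψ := PresentedGroup.toGroup hbwd
  have hφψ : φ.comp ψ = MonoidHom.id (CactusGroup n) := by
    ext g
    simp only [MonoidHom.comp_apply, MonoidHom.id_apply]
    rw [show (ψ (PresentedGroup.of g)) = A n g.1.1 g.1.2 from PresentedGroup.toGroup.of hbwd]
    obtain ⟨hg1, hg2, hg3⟩ := g.2
    have hL : 2 ≤ g.1.2 + 1 - g.1.1 ∧ g.1.2 + 1 - g.1.1 ≤ n := ⟨by omega, by omega⟩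
    have hq : 2 ≤ g.1.2 ∧ g.1.2 ≤ n := ⟨by omega, hg3⟩
    rw [A, X_eq _ hq, X_eq _ hL, map_mul, map_mul]
    rw [show (φ (PresentedGroup.of (⟨g.1.2, hq⟩ : {i : ℕ // 2 ≤ i ∧ i ≤ n}))) = cactusσ n 1 g.1.2
      from PresentedGroup.toGroup.of hfwd]
    rw [show (φ (PresentedGroup.of (⟨g.1.2 + 1 - g.1.1, hL⟩ : {i : ℕ // 2 ≤ i ∧ i ≤ n}))) =
      cactusσ n 1 (g.1.2 + 1 - g.1.1) from PresentedGroup.toGroup.of hfwd]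
    have hs := σ_conj3 1 g.1.2 1 (g.1.2 + 1 - g.1.1) ⟨le_rfl, by omega, hg3⟩
      ⟨le_rfl, by omega, by omega⟩ le_rfl (by omega)
    have e1 : 1 + g.1.2 - (g.1.2 + 1 - g.1.1) = g.1.1 := by omega
    have e2 : 1 + g.1.2 - 1 = g.1.2 := by omega
    rw [e1, e2] at hs
    rw [hs, σ_of]
  have hψφ : ψ.comp φ = MonoidHom.id (PresentedGroup (cactusMinRels n)) := by
    ext x
    simp only [MonoidHom.comp_apply, MonoidHom.id_apply]
    rw [show (φ (PresentedGroup.of x)) = cactusσ n 1 x.1 from PresentedGroup.toGroup.of hfwd]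
    obtain ⟨hx1, hx2⟩ := x.2
    have hv : 1 ≤ 1 ∧ 1 < x.1 ∧ x.1 ≤ n := ⟨le_rfl, by omega, hx2⟩
    rw [cactusσ, dif_pos hv]
    rw [show (ψ (PresentedGroup.of (⟨(1, x.1), hv⟩ : CactusGen n))) = A n 1 x.1
      from PresentedGroup.toGroup.of hbwd]
    have e1 : x.1 + 1 - 1 = x.1 := by omega
    rw [A, e1]
    have hq : 2 ≤ x.1 ∧ x.1 ≤ n := ⟨hx1, hx2⟩
    rw [X_eq _ hq]
    calc PresentedGroup.of ⟨x.1, hq⟩ * PresentedGroup.of ⟨x.1, hq⟩ *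
          PresentedGroup.of ⟨x.1, hq⟩
        = (X n x.1 * X n x.1) * PresentedGroup.of ⟨x.1, hq⟩ := by rw [X_eq _ hq]
      _ = PresentedGroup.of ⟨x.1, hq⟩ := by rw [X_sq]; group
      _ = PresentedGroup.of x := by congr
  refine ⟨MonoidHom.toMulEquiv φ ψ hψφ hφψ, ?_⟩
  intro i h
  exact PresentedGroup.toGroup.of hfwd
end

section
/- For every n ≥ 2, the cactus group J_n cannot be generated by fewer than n − 1 elements; that is, every generating set of J_n has cardinality at least n − 1. In particular, the set {σ_{1,2}, σ_{1,3}, …, σ_{1,n}} is a generating set of J_n of minimal cardinality. -/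
/-! ### Auxiliary machinery -/

/-- The "length index" of a generator: `q - p - 1 ∈ Fin (n-1)`. -/
def cactusLenIdx (n : ℕ) (g : CactusGen n) : Fin (n - 1) :=
  ⟨g.1.2 - g.1.1 - 1, by obtain ⟨h1, h2, h3⟩ := g.2; omega⟩

/-- The map sending a generator to the basis vector indexed by its length. -/
def cactusF (n : ℕ) (g : CactusGen n) : Multiplicative (Fin (n - 1) → ZMod 2) :=
  Multiplicative.ofAdd (Pi.single (cactusLenIdx n g) 1)

lemma cactus_sq_one (m : ℕ) (a : Multiplicative (Fin m → ZMod 2)) : a * a = 1 := by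
  have : a.toAdd + a.toAdd = 0 := by
    funext i
    exact CharTwo.add_self_eq_zero _
  rw [← ofAdd_toAdd a, ← ofAdd_add, this, ofAdd_zero]

lemma cactusF_rels (n : ℕ) : ∀ r ∈ cactusRels n, FreeGroup.lift (cactusF n) r = 1 := by
  rintro r (⟨g, rfl⟩ | ⟨g, h, _, rfl⟩ | ⟨g, h, k, h1, h2, h3, h4, rfl⟩)
  · rw [map_pow, FreeGroup.lift_apply_of, sq, cactus_sq_one]
  · simp only [map_mul, map_inv, FreeGroup.lift_apply_of]
    rw [mul_comm (cactusF n h) (cactusF n g), mul_inv_cancel]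
  · have hidx : cactusLenIdx n k = cactusLenIdx n h := by
      obtain ⟨hg1, hg2, hg3⟩ := g.2
      obtain ⟨hh1, hh2, hh3⟩ := h.2
      obtain ⟨hk1, hk2, hk3⟩ := k.2
      apply Fin.ext
      show k.1.2 - k.1.1 - 1 = h.1.2 - h.1.1 - 1
      omega
    have hk : cactusF n k = cactusF n h := by
      unfold cactusF
      rw [hidx]
    simp only [map_mul, map_inv, FreeGroup.lift_apply_of, hk]
    rw [mul_comm (cactusF n h) (cactusF n g), mul_inv_cancel]

/-- The abelianization-type homomorphism used to separate generators. -/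
def cactusφ (n : ℕ) : CactusGroup n →* Multiplicative (Fin (n - 1) → ZMod 2) :=
  PresentedGroup.toGroup (cactusF_rels n)

lemma cactusφ_of (n : ℕ) (g : CactusGen n) :
    cactusφ n (PresentedGroup.of g) = cactusF n g :=
  PresentedGroup.toGroup.of _

/-- The third cactus relation, in the presented group. -/
lemma cactus_rel3 {n : ℕ} (g h k : CactusGen n) (h1 : g.1.1 ≤ h.1.1) (h2 : h.1.2 ≤ g.1.2)
    (h3 : k.1.1 = g.1.1 + g.1.2 - h.1.2) (h4 : k.1.2 = g.1.1 + g.1.2 - h.1.1) :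
    (PresentedGroup.of g : CactusGroup n) * PresentedGroup.of h =
      PresentedGroup.of k * PresentedGroup.of g := by
  have hmem : (FreeGroup.of g * FreeGroup.of h * (FreeGroup.of k * FreeGroup.of g)⁻¹ :
      FreeGroup (CactusGen n)) ∈ cactusRels n := by
    right; right; exact ⟨g, h, k, h1, h2, h3, h4, rfl⟩
  have : (PresentedGroup.mk (cactusRels n)
      (FreeGroup.of g * FreeGroup.of h * (FreeGroup.of k * FreeGroup.of g)⁻¹)) = 1 := by
    apply (QuotientGroup.eq_one_iff _).2
    exact Subgroup.subset_normalClosure hmem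
  simp only [map_mul, map_inv] at this
  have h5 := mul_eq_one_iff_eq_inv.mp this
  rw [inv_inv] at h5
  exact h5

lemma cactus_single_inj {m : ℕ} {a b : Fin m} (h : (Pi.single a 1 : Fin m → ZMod 2) = Pi.single b 1) :
    a = b := by
  by_contra hne
  have := congrFun h a
  rw [Pi.single_eq_same, Pi.single_eq_of_ne hne] at this
  exact one_ne_zero this

lemma cactusσ_eq (n i : ℕ) (h2 : 2 ≤ i) (hi : i ≤ n) (pf : 1 ≤ 1 ∧ 1 < i ∧ i ≤ n) :
    cactusσ n 1 i = PresentedGroup.of (⟨(1, i), pf⟩ : CactusGen n) := by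
  unfold cactusσ
  rw [dif_pos pf]

/-- For every `n ≥ 2`, every generating set of the cactus group `J_n` has cardinality at
least `n - 1`; moreover the set `{σ_{1,2}, …, σ_{1,n}}` is a generating set of `J_n` of
cardinality exactly `n - 1` (hence of minimal cardinality). -/
theorem cactus_minimal_number_of_generators (n : ℕ) (hn : 2 ≤ n) :
    (∀ S : Set (CactusGroup n), Subgroup.closure S = ⊤ →
      ((n - 1 : ℕ) : Cardinal) ≤ Cardinal.mk S) ∧
    Subgroup.closure {g : CactusGroup n | ∃ i, 2 ≤ i ∧ i ≤ n ∧ g = cactusσ n 1 i} = ⊤ ∧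
    Cardinal.mk {g : CactusGroup n | ∃ i, 2 ≤ i ∧ i ≤ n ∧ g = cactusσ n 1 i} =
      ((n - 1 : ℕ) : Cardinal) := by
  set T : Set (CactusGroup n) := {g | ∃ i, 2 ≤ i ∧ i ≤ n ∧ g = cactusσ n 1 i} with hT
  -- membership of the standard generators in `T`
  have hmemT : ∀ (i : ℕ) (h2 : 2 ≤ i) (hi : i ≤ n) (pf : 1 ≤ 1 ∧ 1 < i ∧ i ≤ n),
      (PresentedGroup.of (⟨(1, i), pf⟩ : CactusGen n) : CactusGroup n) ∈ T := by
    intro i h2 hi pf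
    exact ⟨i, h2, hi, (cactusσ_eq n i h2 hi pf).symm⟩
  -- surjectivity of `cactusφ`
  have hsurj : Function.Surjective (cactusφ n) := by
    rw [← MonoidHom.range_eq_top]
    rw [eq_top_iff]
    intro y _
    have hy : y = Multiplicative.ofAdd (Multiplicative.toAdd y) := rfl
    have hsum : Multiplicative.toAdd y = ∑ i : Fin (n - 1), Pi.single i (Multiplicative.toAdd y i) := by
      ext j
      rw [Finset.sum_apply]
      simp [Pi.single_apply]
    rw [hy, hsum, ofAdd_sum]
    apply prod_mem
    intro i _
    have hcase : ∀ a : ZMod 2, a = 0 ∨ a = 1 := by decide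
    rcases hcase (Multiplicative.toAdd y i) with h0 | h1
    · rw [h0]
      simp only [Pi.single_zero, ofAdd_zero]
      exact one_mem _
    · rw [h1]
      have hpf : 1 ≤ 1 ∧ 1 < (i : ℕ) + 2 ∧ (i : ℕ) + 2 ≤ n := by
        refine ⟨le_refl 1, by omega, ?_⟩
        have := i.2; omega
      refine ⟨PresentedGroup.of (⟨(1, (i : ℕ) + 2), hpf⟩ : CactusGen n), ?_⟩
      rw [cactusφ_of]
      unfold cactusF
      have hidx : cactusLenIdx n (⟨(1, (i : ℕ) + 2), hpf⟩ : CactusGen n) = i := by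
        apply Fin.ext
        show (i : ℕ) + 2 - 1 - 1 = (i : ℕ)
        omega
      rw [hidx]
  -- Part 2 : generation
  have hgen : Subgroup.closure T = ⊤ := by
    rw [eq_top_iff, ← PresentedGroup.closure_range_of (cactusRels n), Subgroup.closure_le]
    rintro x ⟨⟨⟨p, q⟩, hpq⟩, rfl⟩
    obtain ⟨hp1, hpq2, hqn⟩ := hpq
    by_cases hp : p = 1
    · subst hp
      exact Subgroup.subset_closure (hmemT q (by omega) hqn ⟨le_refl 1, hpq2, hqn⟩)
    · -- p ≥ 2 : conjugate by σ_{1,q}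
      have hpf' : 1 ≤ 1 ∧ 1 < q ∧ q ≤ n := ⟨le_refl 1, by omega, hqn⟩
      have hpfk : 1 ≤ 1 ∧ 1 < q + 1 - p ∧ q + 1 - p ≤ n := ⟨le_refl 1, by omega, by omega⟩
      set g' : CactusGen n := ⟨(1, q), hpf'⟩
      set k : CactusGen n := ⟨(1, q + 1 - p), hpfk⟩
      set g : CactusGen n := ⟨(p, q), ⟨hp1, hpq2, hqn⟩⟩
      have hrel := cactus_rel3 g' g k (by simp [g', g]; omega) (by simp [g', g])
        (by show 1 = 1 + q - q; omega) (by show q + 1 - p = 1 + q - p; omega)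
      have hofg : (PresentedGroup.of g : CactusGroup n) =
          (PresentedGroup.of g')⁻¹ * (PresentedGroup.of k * PresentedGroup.of g') := by
        rw [← hrel, inv_mul_cancel_left]
      rw [hofg]
      have hg'T : (PresentedGroup.of g' : CactusGroup n) ∈ Subgroup.closure T :=
        Subgroup.subset_closure (hmemT q (by omega) hqn hpf')
      have hkT : (PresentedGroup.of k : CactusGroup n) ∈ Subgroup.closure T :=
        Subgroup.subset_closure (hmemT (q + 1 - p) (by omega) (by omega) hpfk)
      exact mul_mem (inv_mem hg'T) (mul_mem hkT hg'T)
  -- Part 3 : cardinality of T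
  have hTimage : T = (fun i => cactusσ n 1 i) '' Set.Icc 2 n := by
    ext x
    constructor
    · rintro ⟨i, h2, hi, rfl⟩
      exact ⟨i, Set.mem_Icc.2 ⟨h2, hi⟩, rfl⟩
    · rintro ⟨i, hi, rfl⟩
      obtain ⟨h2, hi'⟩ := Set.mem_Icc.1 hi
      exact ⟨i, h2, hi', rfl⟩
  have hinj : Set.InjOn (fun i => cactusσ n 1 i) (Set.Icc 2 n) := by
    intro i hi j hj hij
    obtain ⟨hi2, hin⟩ := Set.mem_Icc.1 hi
    obtain ⟨hj2, hjn⟩ := Set.mem_Icc.1 hj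
    have pfi : 1 ≤ 1 ∧ 1 < i ∧ i ≤ n := ⟨le_refl 1, by omega, hin⟩
    have pfj : 1 ≤ 1 ∧ 1 < j ∧ j ≤ n := ⟨le_refl 1, by omega, hjn⟩
    simp only at hij
    rw [cactusσ_eq n i hi2 hin pfi, cactusσ_eq n j hj2 hjn pfj] at hij
    have := congrArg (cactusφ n) hij
    rw [cactusφ_of, cactusφ_of] at this
    unfold cactusF at this
    have hsingle := Multiplicative.ofAdd.injective this
    have hidx := cactus_single_inj hsingle
    have : i - 1 - 1 = j - 1 - 1 := congrArg Fin.val hidx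
    omega
  have hcardT : Cardinal.mk T = ((n - 1 : ℕ) : Cardinal) := by
    rw [hTimage, Cardinal.mk_image_eq_of_injOn _ _ hinj, Cardinal.mk_fintype]
    simp [Nat.card_Icc]
  -- Part 1 : lower bound
  refine ⟨?_, hgen, hcardT⟩
  intro S hS
  have hcl : Subgroup.closure (cactusφ n '' S) = ⊤ := by
    rw [← MonoidHom.map_closure, hS, ← MonoidHom.range_eq_map, MonoidHom.range_eq_top]
    exact hsurj
  set s : Set (Fin (n - 1) → ZMod 2) := Multiplicative.toAdd '' (cactusφ n '' S) with hs
  have hspan : Submodule.span (ZMod 2) s = ⊤ := by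
    rw [eq_top_iff]
    intro w _
    have hw : Multiplicative.ofAdd w ∈ Subgroup.closure (cactusφ n '' S) := by
      rw [hcl]; trivial
    refine Subgroup.closure_induction
      (p := fun x _ => Multiplicative.toAdd x ∈ Submodule.span (ZMod 2) s)
      ?_ ?_ ?_ ?_ hw
    · intro x hx
      exact Submodule.subset_span (Set.mem_image_of_mem _ hx)
    · exact Submodule.zero_mem _
    · intro x y _ _ hx hy
      exact Submodule.add_mem _ hx hy
    · intro x _ hx
      exact Submodule.neg_mem _ hx
  calc ((n - 1 : ℕ) : Cardinal)
      = Module.rank (ZMod 2) (Fin (n - 1) → ZMod 2) := by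
        rw [rank_fun']; simp
    _ = Module.rank (ZMod 2) (⊤ : Submodule (ZMod 2) (Fin (n - 1) → ZMod 2)) :=
        (rank_top _ _).symm
    _ = Module.rank (ZMod 2) (Submodule.span (ZMod 2) s) := by rw [hspan]
    _ ≤ Cardinal.mk s := rank_span_le s
    _ ≤ Cardinal.mk (cactusφ n '' S) := Cardinal.mk_image_le
    _ ≤ Cardinal.mk S := Cardinal.mk_image_le
end

section
/- For every n ≥ 2, the cactus group J_n is isomorphic (via the identity on the generators σ_{p,q}) to the group presented by the generators σ_{p,q}, 1 ≤ p < q ≤ n, subject only to those defining relations of the standard presentation of J_n in which at least one generator of the form σ_{1,j} appears; that is, all relations of the standard presentation not involving any generator σ_{1,j} are consequences of the relations that do involve such a generator. -/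
/-- The subset of the standard relators of `J_n` in which a generator of the form
`σ_{1,j}` appears at least once (i.e. some letter of the reduced word has first index `1`). -/
def cactusRelsOne (n : ℕ) : Set (FreeGroup (CactusGen n)) :=
  { w | w ∈ cactusRels n ∧ ∃ l ∈ w.toWord, l.1.1.1 = 1 }

namespace CactusAux

/-! ### Generic group-theoretic lemmas -/

private lemma rel_eq {G : Type*} [Group G] {a b c d : G} (h : a * b * (c * d)⁻¹ = 1) :
    a * b = c * d := by rwa [mul_inv_eq_one] at h

private lemma invol_lemma {G : Type*} [Group G] {a b x : G} (ha : a * a = 1) (hb : b * b = 1)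
    (hx : a * b = x * a) : x * x = 1 := by
  have hx' : x = a * b * a⁻¹ := by rw [eq_mul_inv_iff_mul_eq]; exact hx.symm
  calc x * x = a * (b * b) * a⁻¹ := by rw [hx']; group
    _ = a * 1 * a⁻¹ := by rw [hb]
    _ = 1 := by group

private lemma conj_chain {G : Type*} [Group G] {a b x h h' h'' k : G} (ha : a * a = 1)
    (hx : a * b = x * a) (h1 : a * h = h' * a) (h2 : b * h' = h'' * b) (h3 : a * h'' = k * a) :
    x * h = k * x := by
  have hainv : a⁻¹ = a := inv_eq_of_mul_eq_one_right ha
  have hx' : x = a * b * a := by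
    have : x = a * b * a⁻¹ := by rw [eq_mul_inv_iff_mul_eq]; exact hx.symm
    rw [this, hainv]
  calc x * h = a * b * (a * h) := by rw [hx']; group
    _ = a * (b * h') * a := by rw [h1]; group
    _ = a * h'' * (b * a) := by rw [h2]; group
    _ = k * (a * b * a) := by rw [h3]; group
    _ = k * x := by rw [hx']

private lemma comm_chain {G : Type*} [Group G] {a b x h : G} (ha : a * a = 1)
    (hx : a * b = x * a) (h1 : a * h = h * a) (h2 : b * h = h * b) : x * h = h * x :=
  conj_chain ha hx h1 h2 h1

/-! ### Presented-group generalities -/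

lemma lift_of_eq_mk {α : Type*} (rels : Set (FreeGroup α)) :
    FreeGroup.lift (PresentedGroup.of (rels := rels)) = PresentedGroup.mk rels :=
  FreeGroup.ext_hom _ _ fun _ => rfl

lemma mk_eq_one {α : Type*} {rels : Set (FreeGroup α)} {w : FreeGroup α} (h : w ∈ rels) :
    PresentedGroup.mk rels w = 1 :=
  (QuotientGroup.eq_one_iff w).mpr (Subgroup.subset_normalClosure h)

variable {n : ℕ}

abbrev J1 (n : ℕ) := PresentedGroup (cactusRelsOne n)

lemma toWord_rel (a b c d : CactusGen n) (hbd : b ≠ d) :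
    (FreeGroup.of a * FreeGroup.of b * (FreeGroup.of c * FreeGroup.of d)⁻¹).toWord
      = [(a, true), (b, true), (d, false), (c, false)] := by
  have : FreeGroup.of a * FreeGroup.of b * (FreeGroup.of c * FreeGroup.of d)⁻¹
      = FreeGroup.mk [(a, true), (b, true), (d, false), (c, false)] := by
    rw [show (FreeGroup.of a : FreeGroup (CactusGen n)) = FreeGroup.mk [(a, true)] from rfl,
      show (FreeGroup.of b : FreeGroup (CactusGen n)) = FreeGroup.mk [(b, true)] from rfl,
      show (FreeGroup.of c : FreeGroup (CactusGen n)) = FreeGroup.mk [(c, true)] from rfl,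
      show (FreeGroup.of d : FreeGroup (CactusGen n)) = FreeGroup.mk [(d, true)] from rfl,
      FreeGroup.mul_mk, FreeGroup.mul_mk, FreeGroup.inv_mk, FreeGroup.mul_mk]
    rfl
  rw [this, FreeGroup.toWord_mk]
  simp [FreeGroup.reduce, hbd]

/-- The square relation for an index-1 generator, in the reduced presentation. -/
lemma sq_one {g : CactusGen n} (hg : g.1.1 = 1) :
    (PresentedGroup.of g : J1 n) * PresentedGroup.of g = 1 := by
  have hmem : FreeGroup.of g ^ 2 ∈ cactusRelsOne n := by
    refine ⟨Or.inl ⟨g, rfl⟩, ⟨(g, true), ?_, hg⟩⟩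
    rw [FreeGroup.toWord_of_pow]
    simp
  have h := mk_eq_one hmem
  rw [map_pow, pow_two] at h
  exact h

/-- Derives `of a * of b = of c * of d` in the reduced presentation from membership of
the relator in `cactusRelsOne`. -/
lemma rel_in_J1 {a b c d : CactusGen n}
    (hmem : FreeGroup.of a * FreeGroup.of b * (FreeGroup.of c * FreeGroup.of d)⁻¹
      ∈ cactusRelsOne n) :
    (PresentedGroup.of a : J1 n) * PresentedGroup.of b
      = PresentedGroup.of c * PresentedGroup.of d := by
  have h := mk_eq_one hmem
  rw [map_mul, map_inv, map_mul, map_mul] at h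
  exact rel_eq h

/-- Commutation of an index-1 generator with a later one, in the reduced presentation. -/
lemma comm_one {g h : CactusGen n} (hg : g.1.1 = 1) (hlt : g.1.2 < h.1.1) :
    (PresentedGroup.of g : J1 n) * PresentedGroup.of h
      = PresentedGroup.of h * PresentedGroup.of g := by
  refine rel_in_J1 ⟨Or.inr (Or.inl ⟨g, h, Or.inl hlt, rfl⟩), ?_⟩
  have hne : h ≠ g := by
    intro e
    rw [e] at hlt
    have := g.2.2.1
    omega
  rw [toWord_rel _ _ _ _ hne]
  exact ⟨(g, true), by simp, hg⟩

/-- The cactus conjugation relation for an index-1 outer generator, in the reduced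
presentation. -/
lemma conj_one {g h k : CactusGen n} (hg : g.1.1 = 1) (hsub : h.1.2 ≤ g.1.2)
    (hk1 : k.1.1 = g.1.1 + g.1.2 - h.1.2) (hk2 : k.1.2 = g.1.1 + g.1.2 - h.1.1)
    (hne : h ≠ g) :
    (PresentedGroup.of g : J1 n) * PresentedGroup.of h
      = PresentedGroup.of k * PresentedGroup.of g := by
  refine rel_in_J1 ⟨Or.inr (Or.inr ⟨g, h, k, by omega, hsub, hk1, hk2, rfl⟩), ?_⟩
  rw [toWord_rel _ _ _ _ hne]
  exact ⟨(g, true), by simp, hg⟩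

end CactusAux
namespace CactusAux

variable {n : ℕ}

/-- Smart constructor for generators. -/
def mkGen (p q : ℕ) (h1 : 1 ≤ p) (h2 : p < q) (h3 : q ≤ n) : CactusGen n := ⟨(p, q), h1, h2, h3⟩

@[simp] lemma mkGen_fst {p q h1 h2 h3} : (mkGen p q h1 h2 h3 : CactusGen n).1.1 = p := rfl
@[simp] lemma mkGen_snd {p q h1 h2 h3} : (mkGen p q h1 h2 h3 : CactusGen n).1.2 = q := rfl

lemma gen_ext {a b : CactusGen n} (h1 : a.1.1 = b.1.1) (h2 : a.1.2 = b.1.2) : a = b :=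
  Subtype.ext (Prod.ext h1 h2)

lemma ne_of_fst {a b : CactusGen n} (h : a.1.1 ≠ b.1.1) : a ≠ b := fun e => h (by rw [e])
lemma ne_of_snd {a b : CactusGen n} (h : a.1.2 ≠ b.1.2) : a ≠ b := fun e => h (by rw [e])

section Derived

/-- The fundamental decomposition `σ_{p,q} σ_{1,q} = σ_{1,q} σ_{1,q-p+1}` for `p > 1`. -/
lemma decomp {g : CactusGen n} (hp : 1 < g.1.1) :
    (PresentedGroup.of (mkGen 1 g.1.2 le_rfl (by have := g.2; omega) g.2.2.2) : J1 n) *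
      PresentedGroup.of (mkGen 1 (g.1.2 - g.1.1 + 1) le_rfl (by have := g.2; omega)
        (by have := g.2; omega))
    = PresentedGroup.of g *
      PresentedGroup.of (mkGen 1 g.1.2 le_rfl (by have := g.2; omega) g.2.2.2) := by
  have hgv := g.2
  refine conj_one rfl ?_ ?_ ?_ ?_
  · simp only [mkGen_fst, mkGen_snd]; omega
  · simp only [mkGen_fst, mkGen_snd]; omega
  · simp only [mkGen_fst, mkGen_snd]; omega
  · exact ne_of_snd (by simp only [mkGen_snd]; omega)

lemma sq_all (g : CactusGen n) :
    (PresentedGroup.of g : J1 n) * PresentedGroup.of g = 1 := by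
  by_cases hp : g.1.1 = 1
  · exact sq_one hp
  · have hp' : 1 < g.1.1 := by have := g.2.1; omega
    exact invol_lemma (sq_one rfl) (sq_one rfl) (decomp hp')

lemma comm_all (g h : CactusGen n) (hlt : g.1.2 < h.1.1) :
    (PresentedGroup.of g : J1 n) * PresentedGroup.of h
      = PresentedGroup.of h * PresentedGroup.of g := by
  by_cases hp : g.1.1 = 1
  · exact comm_one hp hlt
  · have hp' : 1 < g.1.1 := by have := g.2.1; omega
    have hgv := g.2
    refine comm_chain (sq_one rfl) (decomp hp') ?_ ?_
    · exact comm_one rfl (by simp only [mkGen_snd]; omega)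
    · exact comm_one rfl (by simp only [mkGen_snd]; omega)

lemma conj_all (g h k : CactusGen n) (hpr : g.1.1 ≤ h.1.1) (hsq : h.1.2 ≤ g.1.2)
    (hk1 : k.1.1 = g.1.1 + g.1.2 - h.1.2) (hk2 : k.1.2 = g.1.1 + g.1.2 - h.1.1) :
    (PresentedGroup.of g : J1 n) * PresentedGroup.of h
      = PresentedGroup.of k * PresentedGroup.of g := by
  have hgv := g.2
  have hhv := h.2
  by_cases hgh : h = g
  · have hk : k = g := by
      refine gen_ext ?_ ?_ <;> rw [hgh] at hk1 hk2 <;> omega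
    rw [hgh, hk]
  by_cases hp : g.1.1 = 1
  · exact conj_one hp hsq hk1 hk2 hgh
  have hp' : 1 < g.1.1 := by omega
  -- abbreviations
  have hcoord : h.1.1 ≠ g.1.1 ∨ h.1.2 ≠ g.1.2 := by
    by_contra hc
    push_neg at hc
    exact hgh (gen_ext hc.1 hc.2)
  refine conj_chain (x := PresentedGroup.of g) (sq_one rfl) (decomp hp')
    (h' := PresentedGroup.of (mkGen (1 + g.1.2 - h.1.2) (1 + g.1.2 - h.1.1)
      (by omega) (by omega) (by omega)))
    (h'' := PresentedGroup.of (mkGen (h.1.1 - g.1.1 + 1) (h.1.2 - g.1.1 + 1)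
      (by omega) (by omega) (by omega))) ?_ ?_ ?_
  · refine conj_one rfl ?_ ?_ ?_ ?_
    · simp only [mkGen_snd]; try omega
    · simp only [mkGen_fst, mkGen_snd]; try omega
    · simp only [mkGen_fst, mkGen_snd]; try omega
    · exact ne_of_fst (by simp only [mkGen_fst]; omega)
  · refine conj_one rfl ?_ ?_ ?_ ?_
    · simp only [mkGen_snd]; try omega
    · simp only [mkGen_fst, mkGen_snd]; try omega
    · simp only [mkGen_fst, mkGen_snd]; try omega
    · rcases hcoord with hc | hc
      · exact ne_of_snd (by simp only [mkGen_snd]; omega)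
      · exact ne_of_fst (by simp only [mkGen_fst]; omega)
  · refine conj_one rfl ?_ ?_ ?_ ?_
    · simp only [mkGen_snd]; try omega
    · simp only [mkGen_fst, mkGen_snd]; try omega
    · simp only [mkGen_fst, mkGen_snd]; try omega
    · exact ne_of_snd (by simp only [mkGen_snd]; omega)

end Derived

lemma key (n : ℕ) : ∀ r ∈ cactusRels n,
    FreeGroup.lift (fun g : CactusGen n => (PresentedGroup.of g : J1 n)) r = 1 := by
  rintro r (⟨g, rfl⟩ | ⟨g, h, hd, rfl⟩ | ⟨g, h, k, h1, h2, hk1, hk2, rfl⟩)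
  · rw [map_pow, FreeGroup.lift_apply_of, pow_two]
    exact sq_all g
  · rw [map_mul, map_inv, map_mul, map_mul, FreeGroup.lift_apply_of, FreeGroup.lift_apply_of,
      mul_inv_eq_one]
    rcases hd with hd | hd
    · exact comm_all g h hd
    · exact (comm_all h g hd).symm
  · rw [map_mul, map_inv, map_mul, map_mul, FreeGroup.lift_apply_of, FreeGroup.lift_apply_of,
      FreeGroup.lift_apply_of, mul_inv_eq_one]
    exact conj_all g h k h1 h2 hk1 hk2

end CactusAux

/-- For every `n ≥ 2`, the cactus group `J_n` is isomorphic, via the identity on the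
generators `σ_{p,q}`, to the group presented by the same generators subject only to those
defining relations of the standard presentation in which some generator `σ_{1,j}` appears. -/
theorem cactus_reduced_relations (n : ℕ) (hn : 2 ≤ n) :
    ∃ e : PresentedGroup (cactusRelsOne n) ≃* CactusGroup n,
      ∀ g : CactusGen n, e (PresentedGroup.of g) = PresentedGroup.of g := by
  have h₁ : ∀ r ∈ cactusRelsOne n,
      FreeGroup.lift (fun g : CactusGen n => (PresentedGroup.of g : CactusGroup n)) r = 1 := by
    intro r hr
    have := congrFun (congrArg (fun f => f.toFun) (CactusAux.lift_of_eq_mk (cactusRels n))) r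
    simp only [MonoidHom.toFun_eq_coe] at this
    rw [show (fun g : CactusGen n => (PresentedGroup.of g : CactusGroup n))
        = PresentedGroup.of from rfl, this]
    exact CactusAux.mk_eq_one hr.1
  let φ : PresentedGroup (cactusRelsOne n) →* CactusGroup n := PresentedGroup.toGroup h₁
  let ψ : CactusGroup n →* PresentedGroup (cactusRelsOne n) :=
    PresentedGroup.toGroup (CactusAux.key n)
  refine ⟨MonoidHom.toMulEquiv φ ψ ?_ ?_, ?_⟩
  · ext x
    simp [φ, ψ, PresentedGroup.toGroup.of]
  · ext x
    simp [φ, ψ, PresentedGroup.toGroup.of]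
  · intro g
    show φ (PresentedGroup.of g) = PresentedGroup.of g
    simp [φ, PresentedGroup.toGroup.of]
end

section
/- For every n ≥ 3, there exists a surjective group homomorphism φ from the cactus group J_n onto the dihedral group D_4 of order 8 determined on the generators σ_i := σ_{1,i} (2 ≤ i ≤ n) by: φ(σ_i) = 1 if i < ⌊(n+1)/2⌋; φ(σ_i) = a if i ≡ 0 (mod 2) and i ≥ ⌊(n+1)/2⌋; and φ(σ_i) = b if i ≡ 1 (mod 2) and i ≥ ⌊(n+1)/2⌋, where a and b are two reflections in D_4 whose product ab has order 4 (so that a² = b² = (ab)⁴ = 1 and a, b generate D_4). -/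
open DihedralGroup in
/-- The value map for the homomorphism: intervals containing fewer than `⌊(n+1)/2⌋` points
go to `1`, long intervals `[p,q]` go to the reflection `sr (2(p+1) + (p+q+1) % 2)`. -/
def cactusD4val (n : ℕ) : CactusGen n → DihedralGroup 4 := fun g =>
  if g.1.1 + (n + 1) / 2 ≤ g.1.2 + 1 then
    sr ((2 * (g.1.1 + 1) + (g.1.1 + g.1.2 + 1) % 2 : ℕ) : ZMod 4)
  else 1

open DihedralGroup in
lemma cactusD4_rels (n : ℕ) : ∀ w ∈ cactusRels n, FreeGroup.lift (cactusD4val n) w = 1 := by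
  rintro w (⟨g, rfl⟩ | ⟨g, h, hdisj, rfl⟩ | ⟨g, h, k, hpr, hsq, hk1, hk2, rfl⟩)
  · simp only [map_pow, FreeGroup.lift_apply_of]
    unfold cactusD4val
    split
    · rw [pow_two, sr_mul_sr, sub_self, one_def]
    · rw [one_pow]
  · simp only [map_mul, map_inv, FreeGroup.lift_apply_of, mul_inv_eq_one]
    obtain ⟨⟨p, q⟩, hg⟩ := g
    obtain ⟨⟨r, s⟩, hh⟩ := h
    simp only at hdisj ⊢
    obtain ⟨hp1, hpq, hqn⟩ := hg
    obtain ⟨hr1, hrs, hsn⟩ := hh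
    simp only at hp1 hpq hqn hr1 hrs hsn
    unfold cactusD4val
    simp only
    by_cases hgl : p + (n + 1) / 2 ≤ q + 1
    · by_cases hhl : r + (n + 1) / 2 ≤ s + 1
      · -- both long
        rw [if_pos hgl, if_pos hhl, sr_mul_sr, sr_mul_sr]
        congr 1
        have key : ((2 * (2 * (r + 1) + (r + s + 1) % 2) : ℕ) : ZMod 4)
            = ((2 * (2 * (p + 1) + (p + q + 1) % 2) : ℕ) : ZMod 4) := by
          rw [ZMod.natCast_eq_natCast_iff']
          have hpar : (r + s + 1) % 2 = (p + q + 1) % 2 := by omega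
          omega
        push_cast at key ⊢
        linear_combination key
      · rw [if_neg hhl, mul_one, one_mul]
    · rw [if_neg hgl, mul_one, one_mul]
  · simp only [map_mul, map_inv, FreeGroup.lift_apply_of, mul_inv_eq_one]
    obtain ⟨⟨p, q⟩, hg⟩ := g
    obtain ⟨⟨r, s⟩, hh⟩ := h
    obtain ⟨⟨k1, k2⟩, hk⟩ := k
    simp only at hpr hsq hk1 hk2 ⊢
    obtain ⟨hp1, hpq, hqn⟩ := hg
    obtain ⟨hr1, hrs, hsn⟩ := hh
    simp only at hp1 hpq hqn hr1 hrs hsn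
    have e1 : k1 + s = p + q := by omega
    have e2 : k2 + r = p + q := by omega
    unfold cactusD4val
    simp only
    by_cases hlong : r + (n + 1) / 2 ≤ s + 1
    · -- h long, hence g and k long
      rw [if_pos hlong, if_pos (by omega), if_pos (by omega)]
      rw [sr_mul_sr, sr_mul_sr]
      congr 1
      have key : ((2 * (r + 1) + (r + s + 1) % 2 + (2 * (k1 + 1) + (k1 + k2 + 1) % 2) : ℕ) : ZMod 4)
          = ((2 * (2 * (p + 1) + (p + q + 1) % 2) : ℕ) : ZMod 4) := by
        rw [ZMod.natCast_eq_natCast_iff']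
        rcases Nat.even_or_odd (p + r) with ⟨c, hc⟩ | ⟨c, hc⟩ <;>
        rcases Nat.even_or_odd (p + q) with ⟨d, hd⟩ | ⟨d, hd⟩ <;>
        omega
      push_cast at key ⊢
      linear_combination key
    · rw [if_neg hlong, if_neg (show ¬((k1, k2).1 + (n + 1) / 2 ≤ (k1, k2).2 + 1) by
        simp only; omega), mul_one, one_mul]

open DihedralGroup in
lemma closure_sr01 : Subgroup.closure ({sr 0, sr 1} : Set (DihedralGroup 4)) = ⊤ := by
  rw [Subgroup.eq_top_iff']
  intro x
  have ha : (sr 0 : DihedralGroup 4) ∈ Subgroup.closure ({sr 0, sr 1} : Set (DihedralGroup 4)) :=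
    Subgroup.subset_closure (Set.mem_insert _ _)
  have hb : (sr 1 : DihedralGroup 4) ∈ Subgroup.closure ({sr 0, sr 1} : Set (DihedralGroup 4)) :=
    Subgroup.subset_closure (Set.mem_insert_of_mem _ rfl)
  have hr : ∀ j : ZMod 4, (r j : DihedralGroup 4) ∈
      Subgroup.closure ({sr 0, sr 1} : Set (DihedralGroup 4)) := by
    intro j
    have h1 : (r 1 : DihedralGroup 4) = sr 0 * sr 1 := by
      rw [sr_mul_sr]; norm_num
    have h2 : (r j : DihedralGroup 4) = (r 1) ^ (j.val) := by
      rw [r_one_pow]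
      congr 1
      simp [ZMod.natCast_val, ZMod.cast_id]
    rw [h2, h1]
    exact pow_mem (mul_mem ha hb) _
  cases x with
  | r j => exact hr j
  | sr j =>
    have : (sr j : DihedralGroup 4) = sr 0 * r j := by rw [sr_mul_r]; rw [zero_add]
    rw [this]
    exact mul_mem ha (hr j)

open DihedralGroup in
/-- For every `n ≥ 3`, there is a surjective homomorphism `φ : J_n → D_4` (dihedral group
of order 8) sending `σ_{1,i}` to `1` if `i < ⌊(n+1)/2⌋`, to `a` if `i` is even and
`i ≥ ⌊(n+1)/2⌋`, and to `b` if `i` is odd and `i ≥ ⌊(n+1)/2⌋`, where `a`, `b` are two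
reflections of `D_4` (i.e. `a² = b² = 1`) whose product `a*b` has order `4` and which
generate `D_4`. -/
theorem cactus_to_D4 (n : ℕ) (hn : 3 ≤ n) :
    ∃ a b : DihedralGroup 4, a ^ 2 = 1 ∧ b ^ 2 = 1 ∧ orderOf (a * b) = 4 ∧
      Subgroup.closure {a, b} = ⊤ ∧
      ∃ φ : CactusGroup n →* DihedralGroup 4, Function.Surjective φ ∧
        ∀ i : ℕ, 2 ≤ i → i ≤ n →
          φ (cactusσ n 1 i) =
            if i < (n + 1) / 2 then 1
            else if i % 2 = 0 then a
            else b := by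
  refine ⟨sr 0, sr 1, ?_, ?_, ?_, closure_sr01, ?_⟩
  · rw [pow_two, sr_mul_sr, sub_self, one_def]
  · rw [pow_two, sr_mul_sr, sub_self, one_def]
  · have : (sr 0 : DihedralGroup 4) * sr 1 = r 1 := by rw [sr_mul_sr]; norm_num
    rw [this, orderOf_r_one]
  · set φ := PresentedGroup.toGroup (cactusD4_rels n) with hφ
    have hgen : ∀ i : ℕ, 2 ≤ i → i ≤ n →
        φ (cactusσ n 1 i) =
          if i < (n + 1) / 2 then 1
          else if i % 2 = 0 then sr 0
          else sr 1 := ?_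
    · refine ⟨φ, ?_, hgen⟩
      have ha : (sr 0 : DihedralGroup 4) ∈ φ.range := by
        rcases Nat.even_or_odd n with ⟨c, hc⟩ | ⟨c, hc⟩
        · exact ⟨cactusσ n 1 n, by
            rw [hgen n (by omega) le_rfl, if_neg (by omega), if_pos (by omega)]⟩
        · exact ⟨cactusσ n 1 (n - 1), by
            rw [hgen (n - 1) (by omega) (by omega), if_neg (by omega), if_pos (by omega)]⟩
      have hb : (sr 1 : DihedralGroup 4) ∈ φ.range := by
        rcases Nat.even_or_odd n with ⟨c, hc⟩ | ⟨c, hc⟩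
        · exact ⟨cactusσ n 1 (n - 1), by
            rw [hgen (n - 1) (by omega) (by omega), if_neg (by omega), if_neg (by omega)]⟩
        · exact ⟨cactusσ n 1 n, by
            rw [hgen n (by omega) le_rfl, if_neg (by omega), if_neg (by omega)]⟩
      rw [← MonoidHom.range_eq_top, ← top_le_iff, ← closure_sr01]
      rw [Subgroup.closure_le]
      rintro x (rfl | rfl)
      · exact ha
      · exact hb
    intro i hi2 hin
    have hvalid : 1 ≤ 1 ∧ 1 < i ∧ i ≤ n := ⟨le_refl 1, by omega, hin⟩
    rw [cactusσ, dif_pos hvalid, PresentedGroup.toGroup.of]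
    unfold cactusD4val
    simp only
    by_cases hlt : i < (n + 1) / 2
    · rw [if_pos hlt, if_neg (by omega)]
    · rw [if_neg hlt, if_pos (by omega)]
      by_cases hpar : i % 2 = 0
      · rw [if_pos hpar]
        have : (2 * (1 + 1) + (1 + i + 1) % 2 : ℕ) = 4 := by omega
        rw [this]
        decide
      · rw [if_neg hpar]
        have : (2 * (1 + 1) + (1 + i + 1) % 2 : ℕ) = 5 := by omega
        rw [this]
        decide
end

section
/- For every n ≥ 2, there exists a group homomorphism ψ from the cactus group J_{2n−1} to the dihedral group D_8 of order 16 determined on the generators σ_i := σ_{1,i} (2 ≤ i ≤ 2n−1) by: ψ(σ_i) = a if i = n; ψ(σ_i) = b if i ≥ n+1 and i ≡ n+1 (mod 2); and ψ(σ_i) = 1 otherwise, where a and b are two reflections in D_8 whose product ab has order 8. Moreover ψ is surjective. -/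
namespace CactusD8

open DihedralGroup

/-- The image of the generator `σ_{1,i}` in `D_8`. -/
def ff (n i : ℕ) : DihedralGroup 8 :=
  if i = n then sr 0
  else if n + 1 ≤ i ∧ i % 2 = (n + 1) % 2 then sr 1
  else 1

lemma ff_sq (n i : ℕ) : ff n i * ff n i = 1 := by
  unfold ff; split_ifs <;> decide

lemma ff_lt (n i : ℕ) (h : i < n) : ff n i = 1 := by
  unfold ff; rw [if_neg (by omega), if_neg (by omega)]

lemma ff_n (n : ℕ) : ff n n = sr 0 := by
  unfold ff; rw [if_pos rfl]

lemma ff_big (n i : ℕ) (h : n + 1 ≤ i) (hp : i % 2 = (n + 1) % 2) : ff n i = sr 1 := by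
  unfold ff; rw [if_neg (by omega), if_pos ⟨h, hp⟩]

lemma ff_big' (n i : ℕ) (h : n + 1 ≤ i) (hp : i % 2 = n % 2) : ff n i = 1 := by
  unfold ff; rw [if_neg (by omega), if_neg (by omega)]

lemma ff_cases (n i : ℕ) (h : n + 1 ≤ i) : ff n i = 1 ∨ ff n i = sr 1 := by
  unfold ff; rw [if_neg (by omega)]; split_ifs <;> simp

lemma sand (n e : ℕ) (h : n + 1 ≤ e) : ff n e * sr 1 * ff n e = sr 1 := by
  rcases ff_cases n e h with h' | h' <;> rw [h'] <;> decide

lemma conj_a (n e : ℕ) (he : n ≤ e) :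
    ff n e * sr 0 * ff n e = if e % 2 = n % 2 then sr 0 else sr 2 := by
  rcases eq_or_lt_of_le he with h | h
  · subst h; rw [if_pos rfl, ff_n]; decide
  · rcases eq_or_ne (e % 2) (n % 2) with hp | hp
    · rw [if_pos hp, ff_big' n e h hp]; decide
    · rw [if_neg hp, ff_big n e h (by omega)]; decide

lemma Fg_val (n q L : ℕ) (hq : n + 1 ≤ q) (hL : n + 1 ≤ L) :
    ff n q * ff n L * ff n q = if L % 2 = (n + 1) % 2 then sr 1 else 1 := by
  split_ifs with hp
  · rw [ff_big n L hL hp]; exact sand n q hq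
  · rw [ff_big' n L hL (by omega), mul_one, ff_sq]

/-- The defining map on all generators `σ_{p,q}`, via `σ_{p,q} = σ_{1,q} σ_{1,q-p+1} σ_{1,q}`. -/
def FF (n : ℕ) (g : CactusGen (2 * n - 1)) : DihedralGroup 8 :=
  ff n g.1.2 * ff n (g.1.2 - g.1.1 + 1) * ff n g.1.2

lemma sq_sandwich (x y : DihedralGroup 8) (hx : x * x = 1) (hy : y * y = 1) :
    x * y * x * (x * y * x) = 1 := by
  have h : x * y * x * (x * y * x) = x * (y * ((x * x) * y)) * x := by group
  rw [h, hx, one_mul, hy, mul_one, hx]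

lemma FF_sq (n : ℕ) (g : CactusGen (2 * n - 1)) : FF n g * FF n g = 1 :=
  sq_sandwich _ _ (ff_sq _ _) (ff_sq _ _)

lemma short_mul (n a b : ℕ) (h : b < n) (y : DihedralGroup 8) :
    ff n a * ff n b * ff n a * y = y * (ff n a * ff n b * ff n a) := by
  rw [ff_lt n b h, mul_one, ff_sq, one_mul, mul_one]

lemma FF_short (n : ℕ) (g : CactusGen (2 * n - 1)) (h : g.1.2 - g.1.1 + 1 < n) :
    FF n g = 1 := by
  unfold FF; rw [ff_lt n _ h, mul_one, ff_sq]

/-- The key computation for the conjugation relations. -/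
lemma key (n p q r s : ℕ) (hn : 2 ≤ n) (h1p : 1 ≤ p) (hpq : p < q) (hq : q ≤ 2 * n - 1)
    (hrs : r < s) (hpr : p ≤ r) (hsq : s ≤ q) :
    ff n q * ff n (q - p + 1) * ff n q * (ff n s * ff n (s - r + 1) * ff n s) =
    ff n (p + q - r) * ff n (s - r + 1) * ff n (p + q - r) *
      (ff n q * ff n (q - p + 1) * ff n q) := by
  by_cases hl : s - r + 1 < n
  · rw [ff_lt n _ hl, mul_one, mul_one, ff_sq, ff_sq, mul_one, one_mul]
  · push_neg at hl
    by_cases hL : q - p + 1 = n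
    · have e1 : r = p := by omega
      have e2 : s = q := by omega
      have ht : p + q - p = q := by omega
      rw [e1, e2, ht]
    · have hL' : n + 1 ≤ q - p + 1 := by omega
      have hq' : n + 1 ≤ q := by omega
      rw [Fg_val n q _ hq' hL']
      by_cases hln : s - r + 1 = n
      · have hs : n ≤ s := by omega
        have ht : n ≤ p + q - r := by omega
        rw [hln, ff_n, conj_a n s hs, conj_a n (p + q - r) ht]
        split_ifs <;> first | decide | omega
      · have hl' : n + 1 ≤ s - r + 1 := by omega
        rcases eq_or_ne ((s - r + 1) % 2) ((n + 1) % 2) with hp | hp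
        · have hs : n + 1 ≤ s := by omega
          have ht : n + 1 ≤ p + q - r := by omega
          rw [ff_big n _ hl' hp, sand n s hs, sand n (p + q - r) ht]
          split_ifs <;> decide
        · rw [ff_big' n _ hl' (by omega), mul_one, mul_one, ff_sq, ff_sq, mul_one, one_mul]

lemma rels_check (n : ℕ) (hn : 2 ≤ n) :
    ∀ w ∈ cactusRels (2 * n - 1), FreeGroup.lift (FF n) w = 1 := by
  rintro w (⟨g, rfl⟩ | ⟨g, h, hdisj, rfl⟩ | ⟨g, h, k, h1, h2, h3, h4, rfl⟩)
  · simp only [pow_two, map_mul, FreeGroup.lift_apply_of]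
    exact FF_sq n g
  · simp only [map_mul, map_inv, FreeGroup.lift_apply_of]
    rw [mul_inv_eq_one]
    obtain ⟨⟨p, q⟩, h1p, hpq, hqm⟩ := g
    obtain ⟨⟨r, s⟩, h1r, hrs, hsm⟩ := h
    simp only at hdisj
    show ff n q * ff n (q - p + 1) * ff n q * (ff n s * ff n (s - r + 1) * ff n s) =
      ff n s * ff n (s - r + 1) * ff n s * (ff n q * ff n (q - p + 1) * ff n q)
    have : q - p + 1 < n ∨ s - r + 1 < n := by omega
    rcases this with h' | h'
    · exact short_mul n q (q - p + 1) h' _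
    · exact (short_mul n s (s - r + 1) h' _).symm
  · simp only [map_mul, map_inv, FreeGroup.lift_apply_of]
    rw [mul_inv_eq_one]
    obtain ⟨⟨p, q⟩, h1p, hpq, hqm⟩ := g
    obtain ⟨⟨r, s⟩, h1r, hrs, hsm⟩ := h
    obtain ⟨⟨u, v⟩, h1u, huv, hvm⟩ := k
    simp only at h1 h2 h3 h4 ⊢
    subst h3; subst h4
    show ff n q * ff n (q - p + 1) * ff n q * (ff n s * ff n (s - r + 1) * ff n s) =
      ff n (p + q - r) * ff n (p + q - r - (p + q - s) + 1) * ff n (p + q - r) *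
        (ff n q * ff n (q - p + 1) * ff n q)
    have e1 : p + q - r - (p + q - s) + 1 = s - r + 1 := by omega
    rw [e1]
    exact key n p q r s hn h1p hpq hqm hrs h1 h2

end CactusD8

open DihedralGroup CactusD8

/-- For every `n ≥ 2`, there is a surjective homomorphism `ψ : J_{2n-1} → D_8` (dihedral
group of order 16) sending `σ_{1,i}` to `a` if `i = n`, to `b` if `i ≥ n+1` and
`i ≡ n+1 (mod 2)`, and to `1` otherwise, where `a`, `b` are two reflections of `D_8`
(i.e. `a² = b² = 1`) whose product `a*b` has order `8`. -/
theorem cactus_to_D8 (n : ℕ) (hn : 2 ≤ n) :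
    ∃ a b : DihedralGroup 8, a ^ 2 = 1 ∧ b ^ 2 = 1 ∧ orderOf (a * b) = 8 ∧
      ∃ ψ : CactusGroup (2 * n - 1) →* DihedralGroup 8, Function.Surjective ψ ∧
        ∀ i : ℕ, 2 ≤ i → i ≤ 2 * n - 1 →
          ψ (cactusσ (2 * n - 1) 1 i) =
            if i = n then a
            else if n + 1 ≤ i ∧ i % 2 = (n + 1) % 2 then b
            else 1 := by
  refine ⟨sr 0, sr 1, by decide, by decide, ?_, ?_⟩
  · have h : sr 0 * sr 1 = (r 1 : DihedralGroup 8) := by decide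
    rw [h, DihedralGroup.orderOf_r_one]
  · refine ⟨PresentedGroup.toGroup (rels_check n hn), ?_, ?_⟩
    case _ =>
      set ψ := PresentedGroup.toGroup (rels_check n hn) with hψ
      have hgen : ∀ i : ℕ, 2 ≤ i → i ≤ 2 * n - 1 →
          ψ (cactusσ (2 * n - 1) 1 i) = ff n i := by
        intro i h2 hm
        have hcond : 1 ≤ 1 ∧ 1 < i ∧ i ≤ 2 * n - 1 := ⟨le_refl 1, by omega, hm⟩
        rw [cactusσ, dif_pos hcond, hψ, PresentedGroup.toGroup.of]
        show ff n i * ff n (i - 1 + 1) * ff n i = ff n i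
        have e : i - 1 + 1 = i := by omega
        rw [e, ff_sq, one_mul]
      have ha : sr 0 ∈ ψ.range :=
        ⟨cactusσ (2 * n - 1) 1 n, by rw [hgen n hn (by omega), ff_n]⟩
      have hb : sr 1 ∈ ψ.range :=
        ⟨cactusσ (2 * n - 1) 1 (n + 1), by
          rw [hgen (n + 1) (by omega) (by omega), ff_big n (n + 1) le_rfl rfl]⟩
      have hr1 : (r 1 : DihedralGroup 8) ∈ ψ.range := by
        have h : (r 1 : DihedralGroup 8) = sr 0 * sr 1 := by decide
        rw [h]; exact mul_mem ha hb
      intro x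
      have hx : x ∈ ψ.range := by
        cases x with
        | r j =>
          have h : (r j : DihedralGroup 8) = r 1 ^ j.val := by
            rw [DihedralGroup.r_one_pow, ZMod.natCast_rightInverse j]
          rw [h]; exact pow_mem hr1 _
        | sr j =>
          have h : (sr j : DihedralGroup 8) = sr 0 * r 1 ^ j.val := by
            rw [DihedralGroup.r_one_pow, ZMod.natCast_rightInverse j, sr_mul_r, zero_add]
          rw [h]; exact mul_mem ha (pow_mem hr1 _)
      exact hx
    case _ =>
      intro i h2 hm
      have hcond : 1 ≤ 1 ∧ 1 < i ∧ i ≤ 2 * n - 1 := ⟨le_refl 1, by omega, hm⟩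
      rw [cactusσ, dif_pos hcond, PresentedGroup.toGroup.of]
      show ff n i * ff n (i - 1 + 1) * ff n i = _
      have e : i - 1 + 1 = i := by omega
      rw [e, ff_sq, one_mul]
      rfl
end

section
/- For every n ≥ 3 and every m ≥ 1, the dihedral group D_m of order 2m is a quotient of the cactus group J_n; that is, there exists a surjective group homomorphism from J_n onto D_m. In particular, there is no upper bound on the orders of finite quotients of J_n. -/
/-- The map sending `σ_{p,q}` to the reflection `sr (p+q)` when the interval `[p,q]` is
"long" (`q - p ≥ n - 2`), and to `1` otherwise. -/
def dihMap (n m : ℕ) (g : CactusGen n) : DihedralGroup m :=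
  if n - 2 ≤ g.1.2 - g.1.1 then DihedralGroup.sr ((g.1.1 + g.1.2 : ℕ) : ZMod m) else 1

lemma dihMap_rels (n m : ℕ) (hn : 3 ≤ n) :
    ∀ w ∈ cactusRels n, FreeGroup.lift (dihMap n m) w = 1 := by
  rintro w (⟨g, rfl⟩ | ⟨g, h, hd, rfl⟩ | ⟨g, h, k, h1, h2, hk1, hk2, rfl⟩)
  · rw [map_pow, FreeGroup.lift_apply_of]
    unfold dihMap
    split
    · simp [sq, sub_self, ← DihedralGroup.one_def]
    · simp
  · obtain ⟨hg1, hg2, hg3⟩ := g.2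
    obtain ⟨hh1, hh2, hh3⟩ := h.2
    simp only [map_mul, map_inv, FreeGroup.lift_apply_of, mul_inv_eq_one] at *
    unfold dihMap
    split_ifs with c1 c2 c2
    · exfalso; omega
    · simp
    · simp
    · simp
  · obtain ⟨hg1, hg2, hg3⟩ := g.2
    obtain ⟨hh1, hh2, hh3⟩ := h.2
    obtain ⟨hkk1, hkk2, hkk3⟩ := k.2
    simp only [map_mul, map_inv, FreeGroup.lift_apply_of, mul_inv_eq_one] at *
    unfold dihMap
    split_ifs with c1 c2 c3 c3 c2 c3 c3
    · -- all long
      simp only [DihedralGroup.sr_mul_sr, DihedralGroup.r.injEq]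
      have key : (k.1.1 + k.1.2) + (h.1.1 + h.1.2) = 2 * (g.1.1 + g.1.2) := by omega
      have key2 : (((k.1.1 + k.1.2) + (h.1.1 + h.1.2) : ℕ) : ZMod m)
          = ((2 * (g.1.1 + g.1.2) : ℕ) : ZMod m) := by rw [key]
      push_cast at key2 ⊢
      linear_combination key2
    · exfalso; omega
    · exfalso; omega
    · simp
    · exfalso; omega
    · exfalso; omega
    · exfalso; omega
    · simp

/-- For every `n ≥ 3` and every `m ≥ 1`, the dihedral group `D_m` of order `2m` is a
quotient of the cactus group `J_n`; in particular there is no upper bound on the orders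
of the finite quotients of `J_n`. -/
theorem cactus_dihedral_quotients (n : ℕ) (hn : 3 ≤ n) :
    (∀ m : ℕ, 1 ≤ m → ∃ φ : CactusGroup n →* DihedralGroup m, Function.Surjective φ) ∧
    (∀ N : ℕ, ∃ m : ℕ, 1 ≤ m ∧ N < Nat.card (DihedralGroup m) ∧
      ∃ φ : CactusGroup n →* DihedralGroup m, Function.Surjective φ) := by
  have main : ∀ m : ℕ, 1 ≤ m →
      ∃ φ : CactusGroup n →* DihedralGroup m, Function.Surjective φ := by
    intro m hm
    haveI : NeZero m := ⟨by omega⟩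
    refine ⟨PresentedGroup.toGroup (dihMap_rels n m hn), ?_⟩
    set φ := PresentedGroup.toGroup (f := dihMap n m) (dihMap_rels n m hn) with hφ
    have ha : DihedralGroup.sr ((n : ℕ) : ZMod m) ∈ φ.range := by
      refine ⟨PresentedGroup.of ⟨(1, n - 1), by omega, by omega, by omega⟩, ?_⟩
      rw [hφ, PresentedGroup.toGroup.of]
      unfold dihMap
      rw [if_pos (by simp; omega)]
      show DihedralGroup.sr ((1 + (n - 1) : ℕ) : ZMod m) = _
      rw [show 1 + (n - 1) = n by omega]
    have hb : DihedralGroup.sr ((n + 1 : ℕ) : ZMod m) ∈ φ.range := by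
      refine ⟨PresentedGroup.of ⟨(1, n), by omega, by omega, by omega⟩, ?_⟩
      rw [hφ, PresentedGroup.toGroup.of]
      unfold dihMap
      rw [if_pos (by simp; omega)]
      show DihedralGroup.sr ((1 + n : ℕ) : ZMod m) = _
      rw [Nat.add_comm]
    have hr1 : DihedralGroup.r (1 : ZMod m) ∈ φ.range := by
      have := φ.range.mul_mem ha hb
      simpa [DihedralGroup.sr_mul_sr] using this
    have hrot : ∀ x : ZMod m, DihedralGroup.r x ∈ φ.range := by
      intro x
      have : DihedralGroup.r ((x.val : ℕ) : ZMod m) ∈ φ.range := by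
        rw [← DihedralGroup.r_one_pow]
        exact φ.range.pow_mem hr1 _
      rwa [ZMod.natCast_rightInverse x] at this
    intro y
    cases y with
    | r j => exact hrot j
    | sr j =>
        have := φ.range.mul_mem ha (hrot (j - (n : ZMod m)))
        simpa [DihedralGroup.sr_mul_r] using this
  refine ⟨main, fun N => ⟨N + 1, by omega, ?_, main (N + 1) (by omega)⟩⟩
  haveI : NeZero (N + 1) := ⟨by omega⟩
  rw [Nat.card_eq_fintype_card, DihedralGroup.card]
  omega
end

section
/- For every n ≥ 3, the lower central series of the cactus group J_n does not stop: for every k ≥ 1, Γ_{k+1}(J_n) is a proper subgroup of Γ_k(J_n). -/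
open scoped commutatorElement

/-- The infinite dihedral group, as pairs `(a, e)` acting on `ℤ` by `x ↦ e * x + a`. -/
@[ext] structure Dinf where
  a : ℤ
  e : ℤˣ

namespace Dinf

instance : Mul Dinf := ⟨fun x y => ⟨x.a + (x.e : ℤ) * y.a, x.e * y.e⟩⟩
instance : One Dinf := ⟨⟨0, 1⟩⟩
instance : Inv Dinf := ⟨fun x => ⟨-((x.e : ℤ) * x.a), x.e⟩⟩

@[simp] lemma mul_a (x y : Dinf) : (x * y).a = x.a + (x.e : ℤ) * y.a := rfl
@[simp] lemma mul_e (x y : Dinf) : (x * y).e = x.e * y.e := rfl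
@[simp] lemma one_a : (1 : Dinf).a = 0 := rfl
@[simp] lemma one_e : (1 : Dinf).e = 1 := rfl
@[simp] lemma inv_a (x : Dinf) : (x⁻¹).a = -((x.e : ℤ) * x.a) := rfl
@[simp] lemma inv_e (x : Dinf) : (x⁻¹).e = x.e := rfl

instance : Group Dinf where
  mul_assoc x y z := by ext <;> simp [Units.val_mul] <;> ring
  one_mul x := by ext <;> simp
  mul_one x := by ext <;> simp
  inv_mul_cancel x := by
    ext
    · rcases Int.units_eq_one_or x.e with h | h <;> simp [h]
    · simp [Int.units_mul_self]

/-- The reflection `x ↦ -x + a`. -/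
def refl (a : ℤ) : Dinf := ⟨a, -1⟩

@[simp] lemma refl_a (a : ℤ) : (refl a).a = a := rfl
@[simp] lemma refl_e (a : ℤ) : (refl a).e = -1 := rfl

lemma refl_mul_refl (a b : ℤ) : refl a * refl b = ⟨a - b, 1⟩ := by
  ext <;> simp [refl] <;> ring

lemma refl_mul_self (a : ℤ) : refl a * refl a = 1 := by
  rw [refl_mul_refl]; ext <;> simp

lemma commutator_eq (x y : Dinf) :
    ⁅x, y⁆ = ⟨(1 - (y.e : ℤ)) * x.a + ((x.e : ℤ) - 1) * y.a, 1⟩ := by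
  rcases Int.units_eq_one_or x.e with hx | hx <;>
    rcases Int.units_eq_one_or y.e with hy | hy <;>
      (ext <;> simp [commutatorElement_def, hx, hy] <;> ring)

/-- The subgroup of translations by multiples of `2^j`. -/
def N (j : ℕ) : Subgroup Dinf where
  carrier := {g | g.e = 1 ∧ (2 ^ j : ℤ) ∣ g.a}
  one_mem' := ⟨rfl, dvd_zero _⟩
  mul_mem' := by
    rintro x y ⟨hx1, hx2⟩ ⟨hy1, hy2⟩
    exact ⟨by simp [hx1, hy1], by simp [hx1]; exact dvd_add hx2 hy2⟩
  inv_mem' := by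
    rintro x ⟨hx1, hx2⟩
    refine ⟨hx1, ?_⟩
    simp [hx1]
    exact hx2

lemma mem_N {j : ℕ} {g : Dinf} : g ∈ N j ↔ g.e = 1 ∧ (2 ^ j : ℤ) ∣ g.a := Iff.rfl

lemma lcs_le_N : ∀ k : ℕ, (⊤ : Subgroup Dinf).lowerCentralSeries (k + 1) ≤ N (k + 1) := by
  intro k
  induction k with
  | zero =>
    show ⁅(⊤ : Subgroup Dinf), ⊤⁆ ≤ N 1
    rw [Subgroup.commutator_le]
    intro x _ y _
    rw [mem_N, commutator_eq]
    refine ⟨rfl, ?_⟩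
    simp only
    rcases Int.units_eq_one_or x.e with hx | hx <;>
      rcases Int.units_eq_one_or y.e with hy | hy <;> simp [hx, hy] <;> omega
  | succ k ih =>
    show ⁅(⊤ : Subgroup Dinf).lowerCentralSeries (k + 1), ⊤⁆ ≤ N (k + 2)
    rw [Subgroup.commutator_le]
    intro x hx y _
    obtain ⟨hx1, m, hm⟩ := ih hx
    rw [mem_N, commutator_eq, hx1]
    refine ⟨rfl, ?_⟩
    simp only [Units.val_one, sub_self, zero_mul, add_zero]
    rcases Int.units_eq_one_or y.e with hy | hy <;> simp [hy, hm]
    exact ⟨m, by ring⟩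

end Dinf

namespace CactusLCS

open Dinf

/-- The map sending long generators (length `≥ n-2`) to reflections. -/
noncomputable def dmap (n : ℕ) : CactusGen n → Dinf := fun g =>
  if (n : ℤ) - 2 ≤ (g.1.2 : ℤ) - (g.1.1 : ℤ) then
    Dinf.refl ((n : ℤ) + 1 - (g.1.1 : ℤ) - (g.1.2 : ℤ)) else 1

lemma dmap_mul_self (n : ℕ) (g : CactusGen n) : dmap n g * dmap n g = 1 := by
  unfold dmap; split_ifs
  · exact refl_mul_self _
  · simp

lemma lift_rels {n : ℕ} (hn : 3 ≤ n) :
    ∀ r ∈ cactusRels n, FreeGroup.lift (dmap n) r = 1 := by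
  intro r hr
  rcases hr with ⟨g, rfl⟩ | ⟨g, h, hdis, rfl⟩ | ⟨g, h, k, h1, h2, hk1, hk2, rfl⟩
  · rw [map_pow, FreeGroup.lift_apply_of, sq, dmap_mul_self]
  · simp only [map_mul, map_inv, FreeGroup.lift_apply_of]
    rw [mul_inv_eq_one]
    obtain ⟨hg1, hg2, hg3⟩ := g.2
    obtain ⟨hh1, hh2, hh3⟩ := h.2
    unfold dmap
    split_ifs with c1 c2 c2
    · exfalso; omega
    · simp
    · simp
    · simp
  · simp only [map_mul, map_inv, FreeGroup.lift_apply_of]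
    rw [mul_inv_eq_one]
    obtain ⟨hg1, hg2, hg3⟩ := g.2
    obtain ⟨hh1, hh2, hh3⟩ := h.2
    obtain ⟨hk21, hk22, hk23⟩ := k.2
    unfold dmap
    split_ifs with c1 c2 c3 c3 c2 c3 c3
    · -- all reflections
      rw [refl_mul_refl, refl_mul_refl]
      ext <;> simp
      omega
    · exfalso; omega
    · exfalso; omega
    · simp
    · exfalso; omega
    · exfalso; omega
    · exfalso; omega
    · simp

/-- The homomorphism from the cactus group onto the infinite dihedral group. -/
noncomputable def Φ {n : ℕ} (hn : 3 ≤ n) : CactusGroup n →* Dinf :=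
  PresentedGroup.toGroup (lift_rels hn)

lemma Φ_1n {n : ℕ} (hn : 3 ≤ n) (h : 1 ≤ 1 ∧ 1 < n ∧ n ≤ n) :
    Φ hn (PresentedGroup.of ⟨(1, n), h⟩) = refl 0 := by
  rw [Φ, PresentedGroup.toGroup.of]
  show (if ((n : ℤ) - 2 ≤ ((n : ℕ) : ℤ) - ((1 : ℕ) : ℤ)) then
    refl ((n : ℤ) + 1 - ((1 : ℕ) : ℤ) - ((n : ℕ) : ℤ)) else 1) = refl 0
  rw [if_pos (by push_cast; omega)]
  congr 1
  push_cast
  ring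

lemma Φ_1n1 {n : ℕ} (hn : 3 ≤ n) (h : 1 ≤ 1 ∧ 1 < n - 1 ∧ n - 1 ≤ n) :
    Φ hn (PresentedGroup.of ⟨(1, n - 1), h⟩) = refl 1 := by
  rw [Φ, PresentedGroup.toGroup.of]
  show (if ((n : ℤ) - 2 ≤ ((n - 1 : ℕ) : ℤ) - ((1 : ℕ) : ℤ)) then
    refl ((n : ℤ) + 1 - ((1 : ℕ) : ℤ) - ((n - 1 : ℕ) : ℤ)) else 1) = refl 1
  rw [if_pos (by omega)]
  congr 1
  omega

lemma comm_refl_refl (a b : ℤ) : ⁅refl a, refl b⁆ = ⟨2 * (a - b), 1⟩ := by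
  rw [commutator_eq]
  ext
  · simp; ring
  · rfl

lemma comm_trans_refl (m c : ℤ) : ⁅(⟨m, 1⟩ : Dinf), refl c⁆ = ⟨2 * m, 1⟩ := by
  rw [commutator_eq]
  ext
  · simp
  · rfl

/-- Iterated commutators `y 0 = a`, `y (k+1) = ⁅y k, b⁆`. -/
def iterComm {G : Type*} [Group G] (a b : G) : ℕ → G
  | 0 => a
  | k + 1 => ⁅iterComm a b k, b⁆

lemma iterComm_mem_lcs {G : Type*} [Group G] (a b : G) :
    ∀ k, iterComm a b k ∈ (⊤ : Subgroup G).lowerCentralSeries k := by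
  intro k
  induction k with
  | zero => exact Subgroup.mem_top _
  | succ k ih =>
    exact Subgroup.commutator_mem_commutator ih (Subgroup.mem_top b)

lemma Φ_iterComm {n : ℕ} (hn : 3 ≤ n) (h1 : 1 ≤ 1 ∧ 1 < n ∧ n ≤ n)
    (h2 : 1 ≤ 1 ∧ 1 < n - 1 ∧ n - 1 ≤ n) (k : ℕ) :
    Φ hn (iterComm (PresentedGroup.of ⟨(1, n), h1⟩)
      (PresentedGroup.of ⟨(1, n - 1), h2⟩) (k + 1)) = ⟨-(2 ^ (k + 1)), 1⟩ := by
  induction k with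
  | zero =>
    show Φ hn ⁅(PresentedGroup.of ⟨(1, n), h1⟩ : CactusGroup n), (PresentedGroup.of ⟨(1, n - 1), h2⟩ : CactusGroup n)⁆ = _
    rw [map_commutatorElement, Φ_1n hn h1, Φ_1n1 hn h2, comm_refl_refl]
    ext
    · norm_num
    · rfl
  | succ k ih =>
    show Φ hn ⁅_, _⁆ = _
    rw [map_commutatorElement, ih, Φ_1n1 hn h2, comm_trans_refl]
    ext
    · show 2 * -(2 ^ (k + 1)) = -(2 ^ (k + 1 + 1))
      ring
    · rfl

end CactusLCS

/-- For every `n ≥ 3`, the lower central series of the cactus group `J_n` does not stop: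
each term `Γ_{k+1}(J_n)` is a proper subgroup of `Γ_k(J_n)` (here `Γ_k(J_n)` is
`lowerCentralSeries (CactusGroup n) (k-1)`, so the claim is that each
`lowerCentralSeries (CactusGroup n) (k+1)` is properly contained in
`lowerCentralSeries (CactusGroup n) k`). -/
theorem cactus_lcs_does_not_stop (n : ℕ) (hn : 3 ≤ n) :
    ∀ k : ℕ, (⊤ : Subgroup (CactusGroup n)).lowerCentralSeries (k + 1) < (⊤ : Subgroup (CactusGroup n)).lowerCentralSeries k := by
  intro k
  refine lt_of_le_of_ne (Subgroup.lowerCentralSeries_antitone ⊤ (Nat.le_succ k)) ?_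
  intro heq
  have h1 : 1 ≤ 1 ∧ 1 < n ∧ n ≤ n := by omega
  have h2 : 1 ≤ 1 ∧ 1 < n - 1 ∧ n - 1 ≤ n := by omega
  set a : CactusGroup n := PresentedGroup.of ⟨(1, n), h1⟩ with ha
  set b : CactusGroup n := PresentedGroup.of ⟨(1, n - 1), h2⟩ with hb
  have hy : CactusLCS.iterComm a b k ∈ (⊤ : Subgroup (CactusGroup n)).lowerCentralSeries (k + 1) := by
    rw [heq]; exact CactusLCS.iterComm_mem_lcs a b k
  have hΦ : CactusLCS.Φ hn (CactusLCS.iterComm a b k) ∈ (⊤ : Subgroup Dinf).lowerCentralSeries (k + 1) :=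
    Subgroup.lowerCentralSeries.map (CactusLCS.Φ hn) (k + 1) (Subgroup.mem_map_of_mem _ hy)
  have hN := Dinf.lcs_le_N k hΦ
  rw [Dinf.mem_N] at hN
  cases k with
  | zero =>
    rw [show CactusLCS.iterComm a b 0 = a from rfl, ha, CactusLCS.Φ_1n hn h1] at hN
    simp [Dinf.refl] at hN
  | succ k =>
    rw [ha, hb, CactusLCS.Φ_iterComm hn h1 h2 k] at hN
    obtain ⟨-, hd⟩ := hN
    rw [dvd_neg] at hd
    have hle : (2 : ℤ) ^ (k + 2) ≤ 2 ^ (k + 1) :=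
      Int.le_of_dvd (by positivity) hd
    have hlt : (2 : ℤ) ^ (k + 1) < 2 ^ (k + 2) :=
      pow_lt_pow_right₀ (by norm_num) (Nat.lt_succ_self (k + 1))
    omega
end

section
/- Let n ≥ 2 and let i, j ≥ 2 satisfy i + j ≤ n. Then the commutator [σ_i, σ_j] of the generators σ_i := σ_{1,i} and σ_j := σ_{1,j} of the cactus group J_n belongs to Γ_3(J_n). -/
/-- Any relator maps to `1` in the presented group. -/
lemma cactus_rel_eq_one {n : ℕ} {r : FreeGroup (CactusGen n)} (hr : r ∈ cactusRels n) :
    PresentedGroup.mk (cactusRels n) r = 1 := by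
  have : r ∈ Subgroup.normalClosure (cactusRels n) := Subgroup.subset_normalClosure hr
  exact (QuotientGroup.eq_one_iff r).mpr this

open scoped commutatorElement

/-- If `i, j ≥ 2` and `i + j ≤ n`, then the commutator `[σ_{1,i}, σ_{1,j}]` belongs to
`Γ₃(J_n) = lowerCentralSeries (CactusGroup n) 2`. -/
theorem cactus_commutator_in_gamma3_of_small (n i j : ℕ) (hn : 2 ≤ n)
    (hi : 2 ≤ i) (hj : 2 ≤ j) (hij : i + j ≤ n) :
    ⁅cactusσ n 1 i, cactusσ n 1 j⁆ ∈ (⊤ : Subgroup (CactusGroup n)).lowerCentralSeries 2 := by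
  have hga : 1 ≤ 1 ∧ 1 < i ∧ i ≤ n := ⟨le_refl 1, by omega, by omega⟩
  have hgb : 1 ≤ 1 ∧ 1 < j ∧ j ≤ n := ⟨le_refl 1, by omega, by omega⟩
  have hgc : 1 ≤ 1 ∧ 1 < i + j ∧ i + j ≤ n := ⟨le_refl 1, by omega, by omega⟩
  have hgb' : 1 ≤ i + 1 ∧ i + 1 < i + j ∧ i + j ≤ n := ⟨by omega, by omega, by omega⟩
  set ga : CactusGen n := ⟨(1, i), hga⟩ with hga_def
  set gb : CactusGen n := ⟨(1, j), hgb⟩ with hgb_def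
  set gc : CactusGen n := ⟨(1, i + j), hgc⟩ with hgc_def
  set gb' : CactusGen n := ⟨(i + 1, i + j), hgb'⟩ with hgb'_def
  set a : CactusGroup n := PresentedGroup.of ga with ha_def
  set b : CactusGroup n := PresentedGroup.of gb with hb_def
  set c : CactusGroup n := PresentedGroup.of gc with hc_def
  set b' : CactusGroup n := PresentedGroup.of gb' with hb'_def
  have ha : cactusσ n 1 i = a := by rw [cactusσ, dif_pos hga]
  have hb : cactusσ n 1 j = b := by rw [cactusσ, dif_pos hgb]
  rw [ha, hb]
  -- relation: c * b = b' * c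
  have rel1 : c * b = b' * c := by
    have h1 : PresentedGroup.mk (cactusRels n)
        (FreeGroup.of gc * FreeGroup.of gb * (FreeGroup.of gb' * FreeGroup.of gc)⁻¹) = 1 := by
      apply cactus_rel_eq_one
      refine Or.inr (Or.inr ⟨gc, gb, gb', le_rfl, ?_, ?_, ?_, rfl⟩)
      · show j ≤ i + j; omega
      · show i + 1 = 1 + (i + j) - j; omega
      · show i + j = 1 + (i + j) - 1; omega
    simp only [map_mul, map_inv] at h1
    exact mul_inv_eq_one.mp h1
  -- relation: a * b' = b' * a
  have rel2 : a * b' = b' * a := by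
    have h1 : PresentedGroup.mk (cactusRels n)
        (FreeGroup.of ga * FreeGroup.of gb' * (FreeGroup.of gb' * FreeGroup.of ga)⁻¹) = 1 := by
      apply cactus_rel_eq_one
      exact Or.inr (Or.inl ⟨ga, gb', Or.inl (show i < i + 1 by omega), rfl⟩)
    simp only [map_mul, map_inv] at h1
    exact mul_inv_eq_one.mp h1
  -- consequences
  have rel2' : b' * a⁻¹ = a⁻¹ * b' := by
    have h := congrArg (fun x => a⁻¹ * x * a⁻¹) rel2
    simp only [mul_assoc, inv_mul_cancel_left, mul_inv_cancel, mul_one,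
      inv_mul_cancel, mul_inv_cancel_left] at h
    exact h
  have hcomm : b'⁻¹ * a⁻¹ * b' = a⁻¹ := by
    rw [mul_assoc, ← rel2', inv_mul_cancel_left]
  set k : CactusGroup n := b * b'⁻¹ with hk
  have hb2 : b = c⁻¹ * (b' * c) := by rw [← rel1, inv_mul_cancel_left]
  have hkcomm : k = ⁅c⁻¹, b'⁆ := by
    rw [commutatorElement_def, hk, hb2]; group
  have hkmem : k ∈ commutator (CactusGroup n) := by
    rw [hkcomm, commutator_def]
    exact Subgroup.commutator_mem_commutator (Subgroup.mem_top _) (Subgroup.mem_top _)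
  -- ⁅a, b⁆ = ⁅a, k⁆
  have key : ⁅a, b⁆ = ⁅a, k⁆ := by
    simp only [commutatorElement_def, hk]
    calc a * b * a⁻¹ * b⁻¹
        = a * b * (b'⁻¹ * a⁻¹ * b') * b⁻¹ := by rw [hcomm]
      _ = a * (b * b'⁻¹) * a⁻¹ * (b * b'⁻¹)⁻¹ := by group
  have hka : ⁅k, a⁆ ∈ (⊤ : Subgroup (CactusGroup n)).lowerCentralSeries 2 := by
    show ⁅k, a⁆ ∈ ⁅(⊤ : Subgroup (CactusGroup n)).lowerCentralSeries 1, ⊤⁆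
    exact Subgroup.commutator_mem_commutator hkmem (Subgroup.mem_top _)
  have hinv : ⁅a, k⁆ = ⁅k, a⁆⁻¹ := (commutatorElement_inv k a).symm
  rw [key, hinv]
  exact ((⊤ : Subgroup (CactusGroup n)).lowerCentralSeries 2).inv_mem hka
end

section
/- For every n ≥ 3, the quotient J_n/Γ_3(J_n) of the cactus group is isomorphic to the group presented by generators x_2, …, x_n subject to the relations: x_i² = 1 for 2 ≤ i ≤ n; [x_i, x_j] = 1 whenever i < ⌊(n+1)/2⌋ or j ≡ i (mod 2); [[x_i, x_j], x_k] = 1 for all 2 ≤ i, j, k ≤ n; and [x_i, x_j] = [x_i, x_k] for all 2 ≤ i ≤ j, k ≤ n with k ≡ j (mod 2); via an isomorphism sending x_i to the class of σ_{1,i}. -/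
open scoped commutatorElement

section Toolkit
variable {G : Type*} [Group G]

private lemma central_inv {A : G} (hA : ∀ x, A * x = x * A) (x : G) :
    A⁻¹ * x = x * A⁻¹ := by
  calc A⁻¹ * x = A⁻¹ * (x * A) * A⁻¹ := by group
  _ = A⁻¹ * (A * x) * A⁻¹ := by rw [← hA x]
  _ = x * A⁻¹ := by group

private lemma central_mul {A B : G} (hA : ∀ x, A * x = x * A) (hB : ∀ x, B * x = x * B)
    (x : G) : (A * B) * x = x * (A * B) := by
  rw [mul_assoc, hB x, ← mul_assoc, hA x, mul_assoc]

private lemma tk_conj (hcen : ∀ a b z : G, ⁅a, b⁆ * z = z * ⁅a, b⁆)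
    {a : G} (ha : a * a = 1) (b : G) : a * b * a = b * ⁅a, b⁆ := by
  have hinv : a⁻¹ = a := (eq_inv_of_mul_eq_one_left ha).symm
  have h1 : a * b * a = a * b * a⁻¹ := by rw [hinv]
  have h2 : a * b * a⁻¹ = ⁅a, b⁆ * b := by rw [commutatorElement_def]; group
  rw [h1, h2, hcen]

private lemma tk_mul_left (hcen : ∀ a b z : G, ⁅a, b⁆ * z = z * ⁅a, b⁆)
    (x y z : G) : ⁅x * y, z⁆ = ⁅x, z⁆ * ⁅y, z⁆ := by
  have h1 : ⁅x * y, z⁆ = x * ⁅y, z⁆ * x⁻¹ * ⁅x, z⁆ := by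
    simp only [commutatorElement_def]; group
  rw [h1, ← hcen y z x, mul_inv_cancel_right, hcen]

private lemma tk_mul_right (hcen : ∀ a b z : G, ⁅a, b⁆ * z = z * ⁅a, b⁆)
    (x y z : G) : ⁅x, y * z⁆ = ⁅x, y⁆ * ⁅x, z⁆ := by
  have h1 : ⁅x, y * z⁆ = ⁅x, y⁆ * (y * ⁅x, z⁆ * y⁻¹) := by
    simp only [commutatorElement_def]; group
  rw [h1, ← hcen x z y, mul_inv_cancel_right]

private lemma tk_sq_right (hcen : ∀ a b z : G, ⁅a, b⁆ * z = z * ⁅a, b⁆)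
    {z : G} (hz : z * z = 1) (x : G) : ⁅x, z⁆ * ⁅x, z⁆ = 1 := by
  rw [← tk_mul_right hcen x z z, hz, commutatorElement_one_right]

private lemma tk_sq_left (hcen : ∀ a b z : G, ⁅a, b⁆ * z = z * ⁅a, b⁆)
    {x : G} (hx : x * x = 1) (z : G) : ⁅x, z⁆ * ⁅x, z⁆ = 1 := by
  rw [← tk_mul_left hcen x x z, hx, commutatorElement_one_left]

private lemma tk_flip (hcen : ∀ a b z : G, ⁅a, b⁆ * z = z * ⁅a, b⁆)
    {x : G} (hx : x * x = 1) (z : G) : ⁅x, z⁆ = ⁅z, x⁆ := by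
  have h := tk_sq_left hcen hx z
  have h2 : ⁅x, z⁆⁻¹ = ⁅x, z⁆ := inv_eq_of_mul_eq_one_right h
  rw [← h2, commutatorElement_inv]

/-- `⁅a*b*a, z⁆ = ⁅b, z⁆` for an involution `a`. -/
private lemma tk_comm_aba (hcen : ∀ a b z : G, ⁅a, b⁆ * z = z * ⁅a, b⁆)
    {a : G} (ha : a * a = 1) (b z : G) : ⁅a * b * a, z⁆ = ⁅b, z⁆ := by
  rw [tk_mul_left hcen, tk_mul_left hcen, mul_assoc, hcen b z ⁅a, z⁆, ← mul_assoc,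
    tk_sq_left hcen ?_ z, one_mul]
  exact ha

/-- `⁅x, c*d*c⁆ = ⁅x, d⁆` for an involution `c`. -/
private lemma tk_comm_cdc (hcen : ∀ a b z : G, ⁅a, b⁆ * z = z * ⁅a, b⁆)
    {c : G} (hc : c * c = 1) (x d : G) : ⁅x, c * d * c⁆ = ⁅x, d⁆ := by
  rw [tk_mul_right hcen, tk_mul_right hcen, mul_assoc, hcen x d ⁅x, c⁆, ← mul_assoc,
    tk_sq_right hcen ?_ x, one_mul]
  exact hc

private lemma tk_comm_word (hcen : ∀ a b z : G, ⁅a, b⁆ * z = z * ⁅a, b⁆)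
    {a c : G} (ha : a * a = 1) (hc : c * c = 1) (b d : G) :
    ⁅a * b * a, c * d * c⁆ = ⁅b, d⁆ := by
  rw [tk_comm_aba hcen ha, tk_comm_cdc hcen hc]

private lemma tk_aba_sq {a b : G} (ha : a * a = 1) (hb : b * b = 1) :
    (a * b * a) * (a * b * a) = 1 := by
  have h1 : (a * b * a) * (a * b * a) = a * (b * ((a * a) * (b * a))) := by group
  rw [h1, ha, one_mul, ← mul_assoc b b a, hb, one_mul, ha]

private lemma tk_word_form (hcen : ∀ a b z : G, ⁅a, b⁆ * z = z * ⁅a, b⁆)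
    {a b c : G} (ha : a * a = 1) (hb : b * b = 1) (hc : c * c = 1) (d : G) :
    (a * b * a) * (c * d * c) * (a * b * a) = d * (⁅c, d⁆ * ⁅b, d⁆) := by
  have hu : (a * b * a) * (a * b * a) = 1 := tk_aba_sq ha hb
  have h1 : (a * b * a) * (c * d * c) * (a * b * a) = (c * d * c) * ⁅a * b * a, c * d * c⁆ :=
    tk_conj hcen hu (c * d * c)
  rw [h1, tk_comm_word hcen ha hc, tk_conj hcen hc d, mul_assoc]

end Toolkit

section PG
variable {β : Type*} {rels : Set (FreeGroup β)}

private lemma pg_rel {w : FreeGroup β} (hw : w ∈ rels) :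
    PresentedGroup.mk rels w = 1 :=
  (QuotientGroup.eq_one_iff w).mpr (Subgroup.subset_normalClosure hw)

private lemma pg_central
    (h3 : ∀ g h k : β,
      ⁅⁅(PresentedGroup.of g : PresentedGroup rels), (PresentedGroup.of h : PresentedGroup rels)⁆,
        (PresentedGroup.of k : PresentedGroup rels)⁆ = 1) :
    ∀ a b z : PresentedGroup rels, ⁅a, b⁆ * z = z * ⁅a, b⁆ := by
  have c1 : ∀ g h : β, ∀ x : PresentedGroup rels,
      ⁅(PresentedGroup.of g : PresentedGroup rels), (PresentedGroup.of h : PresentedGroup rels)⁆ * x =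
        x * ⁅(PresentedGroup.of g : PresentedGroup rels), (PresentedGroup.of h : PresentedGroup rels)⁆ := by
    intro g h x
    have hx : x ∈ Subgroup.centralizer {⁅(PresentedGroup.of g : PresentedGroup rels), PresentedGroup.of h⁆} := by
      refine PresentedGroup.generated_by rels _ (fun j => ?_) x
      refine Subgroup.mem_centralizer_iff.mpr (fun w hw => ?_)
      rw [Set.mem_singleton_iff] at hw
      subst hw
      exact commutatorElement_eq_one_iff_mul_comm.mp (h3 g h j)
    exact Subgroup.mem_centralizer_iff.mp hx _ rfl
  have c2 : ∀ h : β, ∀ a : PresentedGroup rels, ∀ x : PresentedGroup rels,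
      ⁅a, (PresentedGroup.of h : PresentedGroup rels)⁆ * x = x * ⁅a, (PresentedGroup.of h : PresentedGroup rels)⁆ := by
    intro h a
    let S : Subgroup (PresentedGroup rels) :=
      { carrier := {a | ∀ x, ⁅a, PresentedGroup.of h⁆ * x = x * ⁅a, PresentedGroup.of h⁆},
        one_mem' := by
          intro x
          rw [commutatorElement_one_left, one_mul, mul_one]
        mul_mem' := by
          intro a₁ a₂ h₁ h₂
          have key : ⁅a₁ * a₂, (PresentedGroup.of h : PresentedGroup rels)⁆ =
              ⁅a₂, (PresentedGroup.of h : PresentedGroup rels)⁆ *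
              ⁅a₁, (PresentedGroup.of h : PresentedGroup rels)⁆ := by
            have e1 : ⁅a₁ * a₂, (PresentedGroup.of h : PresentedGroup rels)⁆ =
                a₁ * ⁅a₂, (PresentedGroup.of h : PresentedGroup rels)⁆ * a₁⁻¹ *
                ⁅a₁, (PresentedGroup.of h : PresentedGroup rels)⁆ := by
              simp only [commutatorElement_def]; group
            rw [e1, ← h₂ a₁, mul_inv_cancel_right]
          intro x
          rw [key]
          exact central_mul h₂ h₁ x
        inv_mem' := by
          intro a ha
          have key : ⁅a⁻¹, (PresentedGroup.of h : PresentedGroup rels)⁆ =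
              ⁅a, (PresentedGroup.of h : PresentedGroup rels)⁆⁻¹ := by
            have e1 : ⁅a⁻¹, (PresentedGroup.of h : PresentedGroup rels)⁆ =
                a⁻¹ * ⁅a, (PresentedGroup.of h : PresentedGroup rels)⁆⁻¹ * a := by
              simp only [commutatorElement_def]; group
            rw [e1, mul_assoc, central_inv ha a, ← mul_assoc, inv_mul_cancel, one_mul]
          intro x
          rw [key]
          exact central_inv ha x }
    exact fun x => PresentedGroup.generated_by rels S (fun j => c1 j h) a x
  intro a
  let S : Subgroup (PresentedGroup rels) :=
    { carrier := {b | ∀ x, ⁅a, b⁆ * x = x * ⁅a, b⁆},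
      one_mem' := by
        intro x
        rw [commutatorElement_one_right, one_mul, mul_one]
      mul_mem' := by
        intro b₁ b₂ h₁ h₂
        have key : ⁅a, b₁ * b₂⁆ = ⁅a, b₁⁆ * ⁅a, b₂⁆ := by
          have e1 : ⁅a, b₁ * b₂⁆ = ⁅a, b₁⁆ * (b₁ * ⁅a, b₂⁆ * b₁⁻¹) := by
            simp only [commutatorElement_def]; group
          rw [e1, ← h₂ b₁, mul_inv_cancel_right]
        intro x
        rw [key]
        exact central_mul h₁ h₂ x
      inv_mem' := by
        intro b hb
        have key : ⁅a, b⁻¹⁆ = ⁅a, b⁆⁻¹ := by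
          have e1 : ⁅a, b⁻¹⁆ = b⁻¹ * ⁅a, b⁆⁻¹ * b := by
            simp only [commutatorElement_def]; group
          rw [e1, mul_assoc, central_inv hb b, ← mul_assoc, inv_mul_cancel, one_mul]
        intro x
        rw [key]
        exact central_inv hb x }
  exact fun b => PresentedGroup.generated_by rels S (fun j => c2 j a) b

end PG




open scoped commutatorElement

/-- Relators of the presentation of `J_n/Γ₃(J_n)` on generators `x_i` (`2 ≤ i ≤ n`):
`x_i² = 1`; `[x_i, x_j] = 1` if `i < ⌊(n+1)/2⌋` or `j ≡ i (mod 2)`;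
`[[x_i, x_j], x_k] = 1`; and `[x_i, x_j] = [x_i, x_k]` for `i ≤ j`, `i ≤ k`,
`k ≡ j (mod 2)`. -/
def cactusModGamma3Rels (n : ℕ) : Set (FreeGroup {i : ℕ // 2 ≤ i ∧ i ≤ n}) :=
  { w | (∃ g : {i : ℕ // 2 ≤ i ∧ i ≤ n}, w = FreeGroup.of g ^ 2) ∨
    (∃ gi gj : {i : ℕ // 2 ≤ i ∧ i ≤ n}, (gi.1 < (n + 1) / 2 ∨ gj.1 % 2 = gi.1 % 2) ∧
      w = ⁅FreeGroup.of gi, FreeGroup.of gj⁆) ∨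
    (∃ gi gj gk : {i : ℕ // 2 ≤ i ∧ i ≤ n},
      w = ⁅⁅FreeGroup.of gi, FreeGroup.of gj⁆, FreeGroup.of gk⁆) ∨
    (∃ gi gj gk : {i : ℕ // 2 ≤ i ∧ i ≤ n},
      gi.1 ≤ gj.1 ∧ gi.1 ≤ gk.1 ∧ gk.1 % 2 = gj.1 % 2 ∧
      w = ⁅FreeGroup.of gi, FreeGroup.of gj⁆ * (⁅FreeGroup.of gi, FreeGroup.of gk⁆)⁻¹) }


section QSide
variable {n : ℕ}

/-- The generator `x_m` of the target presented group (junk `1` if out of range). -/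
private def Xg (n : ℕ) (m : ℕ) : PresentedGroup (cactusModGamma3Rels n) :=
  if h : 2 ≤ m ∧ m ≤ n then PresentedGroup.of ⟨m, h⟩ else 1

private lemma Xg_of {m : ℕ} (h : 2 ≤ m ∧ m ≤ n) : Xg n m = PresentedGroup.of ⟨m, h⟩ :=
  dif_pos h

private lemma q_sq (m : ℕ) : Xg n m * Xg n m = 1 := by
  unfold Xg
  split
  · rename_i h
    have h1 : PresentedGroup.mk (cactusModGamma3Rels n) (FreeGroup.of (⟨m, h⟩ : {i : ℕ // 2 ≤ i ∧ i ≤ n}) ^ 2) = 1 :=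
      pg_rel (Or.inl ⟨⟨m, h⟩, rfl⟩)
    rw [map_pow, pow_two] at h1
    exact h1
  · rw [one_mul]

private lemma q_comm_rel {i j : ℕ} (hi : 2 ≤ i ∧ i ≤ n) (hj : 2 ≤ j ∧ j ≤ n)
    (hc : i < (n + 1) / 2 ∨ j % 2 = i % 2) : ⁅Xg n i, Xg n j⁆ = 1 := by
  rw [Xg_of hi, Xg_of hj]
  have h1 := pg_rel (rels := cactusModGamma3Rels n)
    (Or.inr (Or.inl ⟨⟨i, hi⟩, ⟨j, hj⟩, hc, rfl⟩))
  rw [map_commutatorElement] at h1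
  exact h1

private lemma q_rel4 {i j k : ℕ} (hi : 2 ≤ i ∧ i ≤ n) (hj : 2 ≤ j ∧ j ≤ n)
    (hk : 2 ≤ k ∧ k ≤ n) (hij : i ≤ j) (hik : i ≤ k) (hpar : k % 2 = j % 2) :
    ⁅Xg n i, Xg n j⁆ = ⁅Xg n i, Xg n k⁆ := by
  rw [Xg_of hi, Xg_of hj, Xg_of hk]
  have h1 := pg_rel (rels := cactusModGamma3Rels n)
    (Or.inr (Or.inr (Or.inr ⟨⟨i, hi⟩, ⟨j, hj⟩, ⟨k, hk⟩, hij, hik, hpar, rfl⟩)))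
  rw [map_mul, map_inv, map_commutatorElement, map_commutatorElement] at h1
  exact mul_inv_eq_one.mp h1

private lemma q_cen : ∀ a b z : PresentedGroup (cactusModGamma3Rels n),
    ⁅a, b⁆ * z = z * ⁅a, b⁆ := by
  refine pg_central (fun g h k => ?_)
  have h1 := pg_rel (rels := cactusModGamma3Rels n)
    (Or.inr (Or.inr (Or.inl ⟨g, h, k, rfl⟩)))
  rw [map_commutatorElement, map_commutatorElement] at h1
  exact h1

/-- commutation from disjointness of lengths. -/
private lemma q_comm_sum {i j : ℕ} (hi : 2 ≤ i ∧ i ≤ n) (hj : 2 ≤ j ∧ j ≤ n)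
    (hsum : i + j ≤ n) : ⁅Xg n i, Xg n j⁆ = 1 := by
  rcases eq_or_ne (j % 2) (i % 2) with hp | hp
  · exact q_comm_rel hi hj (Or.inr hp)
  · rcases le_or_gt i j with hle | hlt
    · exact q_comm_rel hi hj (Or.inl (by omega))
    · have h1 : ⁅Xg n j, Xg n i⁆ = 1 := q_comm_rel hj hi (Or.inl (by omega))
      rw [← tk_flip q_cen (q_sq j) (Xg n i), h1]

/-- The key relation `⁅x_j,x_i⁆⁅x_k,x_i⁆ = ⁅x_l,x_i⁆` among commutators of generators. -/
private lemma q_star {i j k l : ℕ} (hi : 2 ≤ i ∧ i ≤ n) (hj : 2 ≤ j ∧ j ≤ n)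
    (hk : 2 ≤ k ∧ k ≤ n) (hl : 2 ≤ l ∧ l ≤ n) (hij : i ≤ j) (hik : i ≤ k) (hil : i ≤ l)
    (hpar : (i + j + k + l) % 2 = 0) :
    ⁅Xg n j, Xg n i⁆ * ⁅Xg n k, Xg n i⁆ = ⁅Xg n l, Xg n i⁆ := by
  rw [tk_flip q_cen (q_sq j) (Xg n i), tk_flip q_cen (q_sq k) (Xg n i),
    tk_flip q_cen (q_sq l) (Xg n i)]
  rcases eq_or_ne (j % 2) (k % 2) with hjk | hjk
  · have h1 : ⁅Xg n i, Xg n j⁆ = ⁅Xg n i, Xg n k⁆ := q_rel4 hi hj hk hij hik (by omega)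
    have h2 : ⁅Xg n i, Xg n l⁆ = 1 := q_comm_rel hi hl (Or.inr (by omega))
    rw [h1, h2]
    exact tk_sq_right q_cen (q_sq k) (Xg n i)
  · rcases eq_or_ne (i % 2) (j % 2) with hijp | hijp
    · have h1 : ⁅Xg n i, Xg n j⁆ = 1 := q_comm_rel hi hj (Or.inr (by omega))
      have h2 : ⁅Xg n i, Xg n k⁆ = ⁅Xg n i, Xg n l⁆ := q_rel4 hi hk hl hik hil (by omega)
      rw [h1, h2, one_mul]
    · have h1 : ⁅Xg n i, Xg n k⁆ = 1 := q_comm_rel hi hk (Or.inr (by omega))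
      have h2 : ⁅Xg n i, Xg n j⁆ = ⁅Xg n i, Xg n l⁆ := q_rel4 hi hj hl hij hil (by omega)
      rw [h1, h2, mul_one]

end QSide

section HSide
variable {n : ℕ}

private lemma gen_sq (x : CactusGen n) :
    (PresentedGroup.of x : CactusGroup n) * PresentedGroup.of x = 1 := by
  have h1 : PresentedGroup.mk (cactusRels n) (FreeGroup.of x ^ 2) = 1 :=
    pg_rel (Or.inl ⟨x, rfl⟩)
  rw [map_pow, pow_two] at h1
  exact h1

private lemma g_sq (p q : ℕ) : cactusσ n p q * cactusσ n p q = 1 := by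
  unfold cactusσ
  split
  · exact gen_sq _
  · rw [one_mul]

private lemma g_sub {p q : ℕ} (hp : 1 ≤ p) (hpq : p < q) (hq : q ≤ n) :
    cactusσ n p q = cactusσ n 1 q * cactusσ n 1 (q - p + 1) * cactusσ n 1 q := by
  have hq' : 1 ≤ 1 ∧ 1 < q ∧ q ≤ n := by omega
  have hm' : 1 ≤ 1 ∧ 1 < q - p + 1 ∧ q - p + 1 ≤ n := by omega
  have hpq' : 1 ≤ p ∧ p < q ∧ q ≤ n := by omega
  have h1 := pg_rel (rels := cactusRels n) (Or.inr (Or.inr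
    ⟨⟨(1, q), hq'⟩, ⟨(1, q - p + 1), hm'⟩, ⟨(p, q), hpq'⟩,
      le_refl 1, show q - p + 1 ≤ q by omega, show p = 1 + q - (q - p + 1) by omega,
      show q = 1 + q - 1 by omega, rfl⟩))
  rw [map_mul, map_mul, map_inv, map_mul] at h1
  have h2 : (PresentedGroup.of ⟨(1, q), hq'⟩ : CactusGroup n) *
      PresentedGroup.of ⟨(1, q - p + 1), hm'⟩ =
      PresentedGroup.of ⟨(p, q), hpq'⟩ * PresentedGroup.of ⟨(1, q), hq'⟩ :=
    mul_inv_eq_one.mp h1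
  rw [cactusσ, dif_pos hpq', cactusσ, dif_pos hq', cactusσ, dif_pos hm']
  have hqsq := gen_sq (⟨(1, q), hq'⟩ : CactusGen n)
  calc (PresentedGroup.of ⟨(p, q), hpq'⟩ : CactusGroup n)
      = PresentedGroup.of ⟨(p, q), hpq'⟩ * (PresentedGroup.of ⟨(1, q), hq'⟩ * PresentedGroup.of ⟨(1, q), hq'⟩) := by
        rw [hqsq, mul_one]
    _ = (PresentedGroup.of ⟨(p, q), hpq'⟩ * PresentedGroup.of ⟨(1, q), hq'⟩) * PresentedGroup.of ⟨(1, q), hq'⟩ := by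
        rw [mul_assoc]
    _ = (PresentedGroup.of ⟨(1, q), hq'⟩ * PresentedGroup.of ⟨(1, q - p + 1), hm'⟩) * PresentedGroup.of ⟨(1, q), hq'⟩ := by
        rw [← h2]

private lemma g_disj {p q r s : ℕ} (hg : 1 ≤ p ∧ p < q ∧ q ≤ n) (hh : 1 ≤ r ∧ r < s ∧ s ≤ n)
    (hd : q < r ∨ s < p) :
    cactusσ n p q * cactusσ n r s = cactusσ n r s * cactusσ n p q := by
  have h1 := pg_rel (rels := cactusRels n) (Or.inr (Or.inl
    ⟨⟨(p, q), hg⟩, ⟨(r, s), hh⟩, hd, rfl⟩))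
  rw [map_mul, map_mul, map_inv, map_mul] at h1
  have h2 : (PresentedGroup.of ⟨(p, q), hg⟩ : CactusGroup n) * PresentedGroup.of ⟨(r, s), hh⟩ =
      PresentedGroup.of ⟨(r, s), hh⟩ * PresentedGroup.of ⟨(p, q), hg⟩ :=
    mul_inv_eq_one.mp h1
  rw [cactusσ, dif_pos hg, cactusσ, dif_pos hh]
  exact h2

private lemma g_nest {p q r s : ℕ} (hg : 1 ≤ p ∧ p < q ∧ q ≤ n) (hh : 1 ≤ r ∧ r < s ∧ s ≤ n)
    (hpr : p ≤ r) (hsq : s ≤ q) :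
    cactusσ n p q * cactusσ n r s = cactusσ n (p + q - s) (p + q - r) * cactusσ n p q := by
  have hk' : 1 ≤ p + q - s ∧ p + q - s < p + q - r ∧ p + q - r ≤ n := by omega
  have h1 := pg_rel (rels := cactusRels n) (Or.inr (Or.inr
    ⟨⟨(p, q), hg⟩, ⟨(r, s), hh⟩, ⟨(p + q - s, p + q - r), hk'⟩,
      hpr, hsq, rfl, rfl, rfl⟩))
  rw [map_mul, map_mul, map_inv, map_mul] at h1
  have h2 : (PresentedGroup.of ⟨(p, q), hg⟩ : CactusGroup n) * PresentedGroup.of ⟨(r, s), hh⟩ =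
      PresentedGroup.of ⟨(p + q - s, p + q - r), hk'⟩ * PresentedGroup.of ⟨(p, q), hg⟩ :=
    mul_inv_eq_one.mp h1
  rw [cactusσ, dif_pos hg, cactusσ, dif_pos hh, cactusσ, dif_pos hk']
  exact h2

end HSide

section HQ
variable {n : ℕ}

private abbrev Hn (n : ℕ) := CactusGroup n ⧸ (⊤ : Subgroup (CactusGroup n)).lowerCentralSeries 2

private lemma h_trip : ∀ a b c : Hn n, ⁅⁅a, b⁆, c⁆ = 1 := by
  intro a b c
  refine QuotientGroup.induction_on a fun x => QuotientGroup.induction_on b fun y =>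
    QuotientGroup.induction_on c fun z => ?_
  have hmem : ⁅⁅x, y⁆, z⁆ ∈ (⊤ : Subgroup (CactusGroup n)).lowerCentralSeries 2 :=
    Subgroup.commutator_mem_commutator
      (Subgroup.commutator_mem_commutator (Subgroup.mem_top x) (Subgroup.mem_top y))
      (Subgroup.mem_top z)
  have h1 : ((⁅⁅x, y⁆, z⁆ : CactusGroup n) : Hn n) = 1 :=
    (QuotientGroup.eq_one_iff _).mpr hmem
  simpa only [commutatorElement_def, QuotientGroup.mk_mul, QuotientGroup.mk_inv] using h1

private lemma h_cen : ∀ a b z : Hn n, ⁅a, b⁆ * z = z * ⁅a, b⁆ := fun a b z =>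
  commutatorElement_eq_one_iff_mul_comm.mp (h_trip ⁅a, b⁆ z ⁅a,b⁆ ▸ h_trip a b z)

private def tH (n m : ℕ) : Hn n := QuotientGroup.mk (cactusσ n 1 m)

private def sH (n p q : ℕ) : Hn n := QuotientGroup.mk (cactusσ n p q)

private lemma t_sq (m : ℕ) : tH n m * tH n m = 1 := by
  rw [tH, ← QuotientGroup.mk_mul, g_sq, QuotientGroup.mk_one]

private lemma s_sq (p q : ℕ) : sH n p q * sH n p q = 1 := by
  rw [sH, ← QuotientGroup.mk_mul, g_sq, QuotientGroup.mk_one]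

private lemma h_sub {p q : ℕ} (hp : 1 ≤ p) (hpq : p < q) (hq : q ≤ n) :
    sH n p q = tH n q * tH n (q - p + 1) * tH n q := by
  rw [sH, tH, g_sub hp hpq hq, QuotientGroup.mk_mul, QuotientGroup.mk_mul]
  rfl

private lemma h_star' (p r s q i' j' k' l' : ℕ) (hp : 1 ≤ p) (hpr : p ≤ r) (hrs : r < s)
    (hsq : s ≤ q) (hqn : q ≤ n) (hi : i' = s - r + 1) (hj : j' = s) (hk : k' = q - p + 1)
    (hl : l' = p + q - r) :
    ⁅tH n j', tH n i'⁆ * ⁅tH n k', tH n i'⁆ = ⁅tH n l', tH n i'⁆ := by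
  rw [hi, hj, hk, hl]
  have hg : 1 ≤ p ∧ p < q ∧ q ≤ n := by omega
  have hh : 1 ≤ r ∧ r < s ∧ s ≤ n := by omega
  have h1 := g_nest (n := n) hg hh hpr hsq
  have h2 : sH n p q * sH n r s = sH n (p + q - s) (p + q - r) * sH n p q := by
    rw [sH, sH, sH, ← QuotientGroup.mk_mul, ← QuotientGroup.mk_mul, h1]
  have h3 : sH n p q * sH n r s * sH n p q = sH n (p + q - s) (p + q - r) := by
    rw [h2, mul_assoc, s_sq, mul_one]
  rw [h_sub hp (by omega) hqn, h_sub (by omega : 1 ≤ r) hrs (by omega),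
    h_sub (by omega : 1 ≤ p + q - s) (by omega) (by omega)] at h3
  have e1 : p + q - r - (p + q - s) + 1 = s - r + 1 := by omega
  rw [e1] at h3
  rw [tk_word_form h_cen (t_sq q) (t_sq (q - p + 1)) (t_sq s) (tH n (s - r + 1))] at h3
  rw [tk_conj h_cen (t_sq (p + q - r)) (tH n (s - r + 1))] at h3
  exact mul_left_cancel h3

private lemma h_disj {m₁ m₂ : ℕ} (h1 : 2 ≤ m₁) (h2 : 2 ≤ m₂) (hsum : m₁ + m₂ ≤ n) :
    ⁅tH n m₁, tH n m₂⁆ = 1 := by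
  have hg : 1 ≤ 1 ∧ 1 < m₁ ∧ m₁ ≤ n := by omega
  have hh : 1 ≤ m₁ + 1 ∧ m₁ + 1 < m₁ + m₂ ∧ m₁ + m₂ ≤ n := by omega
  have hd := g_disj (n := n) hg hh (Or.inl (by omega))
  have hq : sH n 1 m₁ * sH n (m₁ + 1) (m₁ + m₂) = sH n (m₁ + 1) (m₁ + m₂) * sH n 1 m₁ := by
    rw [sH, sH, ← QuotientGroup.mk_mul, ← QuotientGroup.mk_mul, hd]
  have hcomm : ⁅sH n 1 m₁, sH n (m₁ + 1) (m₁ + m₂)⁆ = 1 :=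
    commutatorElement_eq_one_iff_mul_comm.mpr hq
  rw [h_sub (p := m₁ + 1) (q := m₁ + m₂) (by omega) (by omega) (by omega)] at hcomm
  have e1 : m₁ + m₂ - (m₁ + 1) + 1 = m₂ := by omega
  rw [e1] at hcomm
  rw [tk_comm_cdc h_cen (t_sq (m₁ + m₂)) (sH n 1 m₁) (tH n m₂)] at hcomm
  have e2 : sH n 1 m₁ = tH n m₁ := rfl
  rw [e2] at hcomm
  exact hcomm

private lemma h_R1 {i j : ℕ} (hi : 2 ≤ i ∧ i ≤ n) (hj : 2 ≤ j ∧ j ≤ n)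
    (hpar : i % 2 = j % 2) : ⁅tH n i, tH n j⁆ = 1 := by
  have aux : ∀ a b : ℕ, 2 ≤ a → a ≤ n → b ≤ n → a < b → a % 2 = b % 2 →
      ⁅tH n a, tH n b⁆ = 1 := by
    intro a b ha2 han hbn hab hpar'
    have h1 := h_star' (n := n) ((b - a) / 2 + 1) (b - a + 1) b b a b ((a + b) / 2) ((a + b) / 2)
      (by omega) (by omega) (by omega) (by omega) (by omega) (by omega) rfl (by omega) (by omega)
    have h2 : ⁅tH n b, tH n a⁆ = 1 := mul_eq_right.mp h1
    rw [tk_flip h_cen (t_sq a) (tH n b), h2]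
  rcases lt_trichotomy i j with h | h | h
  · exact aux i j (by omega) (by omega) (by omega) h hpar
  · subst h; exact commutatorElement_self _
  · rw [tk_flip h_cen (t_sq i) (tH n j)]
    exact aux j i (by omega) (by omega) (by omega) h hpar.symm

private lemma h_R3 {i j k : ℕ} (hi : 2 ≤ i) (hij : i ≤ j) (hjn : j ≤ n) (hik : i ≤ k)
    (hkn : k ≤ n) (hpar : j % 2 = k % 2) : ⁅tH n i, tH n j⁆ = ⁅tH n i, tH n k⁆ := by
  have aux : ∀ a b : ℕ, i ≤ a → a ≤ b → b ≤ n → a % 2 = b % 2 →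
      ⁅tH n i, tH n a⁆ = ⁅tH n i, tH n b⁆ := by
    intro a b hia hab hbn hpar'
    rcases eq_or_lt_of_le hab with h | h
    · subst h; rfl
    · have h1 := h_star' (n := n) (a - i + 1) (a - i + 1) a b i a (b - a + i) b
        (by omega) (le_refl _) (by omega) (by omega) (by omega) (by omega) rfl (by omega) (by omega)
      have h2 : ⁅tH n (b - a + i), tH n i⁆ = 1 := by
        rw [tk_flip h_cen (t_sq (b - a + i)) (tH n i)]
        exact h_R1 (by omega) (by omega) (by omega)
      rw [h2, mul_one] at h1
      rw [tk_flip h_cen (t_sq i) (tH n a), tk_flip h_cen (t_sq i) (tH n b)]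
      exact h1
  rcases le_total j k with h | h
  · exact aux j k hij h hkn hpar
  · exact (aux k j hik h hjn hpar.symm).symm

private lemma h_R2 {i j : ℕ} (hi : 2 ≤ i ∧ i ≤ n) (hj : 2 ≤ j ∧ j ≤ n)
    (hsmall : i < (n + 1) / 2) : ⁅tH n i, tH n j⁆ = 1 := by
  rcases eq_or_ne (i % 2) (j % 2) with hp | hp
  · exact h_R1 hi hj hp
  · have core : ∀ a b : ℕ, 2 ≤ a → a ≤ n → b ≤ n → a < (n + 1) / 2 → a ≤ b →
        a % 2 ≠ b % 2 → ⁅tH n a, tH n b⁆ = 1 := by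
      intro a b ha2 han hbn hsm hab hpar
      have h1 : ⁅tH n a, tH n b⁆ = ⁅tH n a, tH n (a + 1)⁆ :=
        h_R3 ha2 hab hbn (by omega) (by omega) (by omega)
      rw [h1]
      exact h_disj ha2 (by omega) (by omega)
    rcases le_total i j with h | h
    · exact core i j (by omega) (by omega) (by omega) hsmall h hp
    · rw [tk_flip h_cen (t_sq i) (tH n j)]
      exact core j i (by omega) (by omega) (by omega) (by omega) h (by omega)
end HQ

section Maps
variable {n : ℕ}

private def fQ (n : ℕ) : CactusGen n → PresentedGroup (cactusModGamma3Rels n) :=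
  fun g => Xg n g.1.2 * Xg n (g.1.2 - g.1.1 + 1) * Xg n g.1.2

private lemma fQ_rels (n : ℕ) : ∀ r ∈ cactusRels n, FreeGroup.lift (fQ n) r = 1 := by
  intro w hw
  rcases hw with ⟨g1, rfl⟩ | ⟨g1, g2, hd, rfl⟩ | ⟨g1, g2, g3, hle1, hle2, hk1, hk2, rfl⟩
  · rw [map_pow, FreeGroup.lift_apply_of, pow_two]
    exact tk_aba_sq (q_sq _) (q_sq _)
  · have hg := g1.2
    have hh := g2.2
    simp only [map_mul, map_inv, FreeGroup.lift_apply_of]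
    refine mul_inv_eq_one.mpr (commutatorElement_eq_one_iff_mul_comm.mp ?_)
    show ⁅Xg n g1.1.2 * Xg n (g1.1.2 - g1.1.1 + 1) * Xg n g1.1.2,
          Xg n g2.1.2 * Xg n (g2.1.2 - g2.1.1 + 1) * Xg n g2.1.2⁆ = 1
    rw [tk_comm_word q_cen (q_sq _) (q_sq _)]
    exact q_comm_sum ⟨by omega, by omega⟩ ⟨by omega, by omega⟩ (by omega)
  · have hg := g1.2
    have hh := g2.2
    have hk := g3.2
    simp only [map_mul, map_inv, FreeGroup.lift_apply_of]
    refine mul_inv_eq_one.mpr ?_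
    have hfg2 : fQ n g1 * fQ n g1 = 1 := tk_aba_sq (q_sq _) (q_sq _)
    have key : fQ n g1 * fQ n g2 * fQ n g1 = fQ n g3 := by
      show (Xg n g1.1.2 * Xg n (g1.1.2 - g1.1.1 + 1) * Xg n g1.1.2) *
          (Xg n g2.1.2 * Xg n (g2.1.2 - g2.1.1 + 1) * Xg n g2.1.2) *
          (Xg n g1.1.2 * Xg n (g1.1.2 - g1.1.1 + 1) * Xg n g1.1.2) =
          Xg n g3.1.2 * Xg n (g3.1.2 - g3.1.1 + 1) * Xg n g3.1.2
      rw [tk_word_form q_cen (q_sq _) (q_sq _) (q_sq _)]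
      rw [hk2, hk1]
      have e1 : g1.1.1 + g1.1.2 - g2.1.1 - (g1.1.1 + g1.1.2 - g2.1.2) + 1
          = g2.1.2 - g2.1.1 + 1 := by omega
      rw [e1, tk_conj q_cen (q_sq _)]
      congr 1
      exact q_star ⟨by omega, by omega⟩ ⟨by omega, by omega⟩ ⟨by omega, by omega⟩
        ⟨by omega, by omega⟩ (by omega) (by omega) (by omega) (by omega)
    calc fQ n g1 * fQ n g2 = fQ n g1 * fQ n g2 * (fQ n g1 * fQ n g1) := by
          rw [hfg2, mul_one]
      _ = (fQ n g1 * fQ n g2 * fQ n g1) * fQ n g1 := by rw [← mul_assoc]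
      _ = fQ n g3 * fQ n g1 := by rw [key]

private def ψ₁ (n : ℕ) : CactusGroup n →* PresentedGroup (cactusModGamma3Rels n) :=
  PresentedGroup.toGroup (fQ_rels n)

private lemma ψ₁_of (g : CactusGen n) : ψ₁ n (PresentedGroup.of g) = fQ n g :=
  PresentedGroup.toGroup.of (fQ_rels n)

private lemma qlcs (n : ℕ) :
    (⊤ : Subgroup (PresentedGroup (cactusModGamma3Rels n))).lowerCentralSeries 2 = ⊥ := by
  apply Subgroup.lowerCentralSeries_succ_eq_bot
  rw [Subgroup.top_lowerCentralSeries_one, commutator_def]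
  exact Subgroup.commutator_le.mpr fun a _ b _ =>
    Subgroup.mem_center_iff.mpr fun z => (q_cen a b z).symm

private lemma psi_ker (n : ℕ) : (⊤ : Subgroup (CactusGroup n)).lowerCentralSeries 2 ≤ (ψ₁ n).ker := by
  intro x hx
  have h1 := Subgroup.lowerCentralSeries.map (ψ₁ n) 2 (Subgroup.mem_map_of_mem (ψ₁ n) hx)
  rw [qlcs] at h1
  exact MonoidHom.mem_ker.mpr (Subgroup.mem_bot.mp h1)

private def ψ (n : ℕ) : Hn n →* PresentedGroup (cactusModGamma3Rels n) :=
  QuotientGroup.lift _ (ψ₁ n) (psi_ker n)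

private lemma ψ_mk (g : CactusGroup n) : ψ n (QuotientGroup.mk g) = ψ₁ n g := rfl

private def fH (n : ℕ) : {i : ℕ // 2 ≤ i ∧ i ≤ n} → Hn n :=
  fun i => QuotientGroup.mk (cactusσ n 1 i.1)

private lemma fH_rels (n : ℕ) : ∀ r ∈ cactusModGamma3Rels n, FreeGroup.lift (fH n) r = 1 := by
  intro w hw
  rcases hw with ⟨g1, rfl⟩ | ⟨gi, gj, hc, rfl⟩ | ⟨gi, gj, gk, rfl⟩ |
    ⟨gi, gj, gk, hij, hik, hpar, rfl⟩
  · rw [map_pow, FreeGroup.lift_apply_of, pow_two]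
    exact t_sq g1.1
  · rw [map_commutatorElement, FreeGroup.lift_apply_of, FreeGroup.lift_apply_of]
    rcases hc with hsmall | hpar
    · exact h_R2 ⟨gi.2.1, gi.2.2⟩ ⟨gj.2.1, gj.2.2⟩ hsmall
    · exact h_R1 ⟨gi.2.1, gi.2.2⟩ ⟨gj.2.1, gj.2.2⟩ hpar.symm
  · rw [map_commutatorElement, map_commutatorElement, FreeGroup.lift_apply_of, FreeGroup.lift_apply_of,
      FreeGroup.lift_apply_of]
    exact h_trip _ _ _
  · rw [map_mul, map_inv, map_commutatorElement, map_commutatorElement, FreeGroup.lift_apply_of,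
      FreeGroup.lift_apply_of, FreeGroup.lift_apply_of]
    refine mul_inv_eq_one.mpr ?_
    exact h_R3 gi.2.1 hij gj.2.2 hik gk.2.2 hpar.symm

private def φh (n : ℕ) : PresentedGroup (cactusModGamma3Rels n) →* Hn n :=
  PresentedGroup.toGroup (fH_rels n)

private lemma φh_of (x : {i : ℕ // 2 ≤ i ∧ i ≤ n}) : φh n (PresentedGroup.of x) = fH n x :=
  PresentedGroup.toGroup.of (fH_rels n)

private lemma φh_Xg {m : ℕ} (h : 2 ≤ m ∧ m ≤ n) :
    φh n (Xg n m) = QuotientGroup.mk (cactusσ n 1 m) := by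
  rw [Xg_of h, φh_of]
  rfl

private lemma comp1 (n : ℕ) : (ψ n).comp (φh n) = MonoidHom.id _ := by
  refine PresentedGroup.ext fun x => ?_
  show ψ n (φh n (PresentedGroup.of x)) = PresentedGroup.of x
  rw [φh_of]
  have hx := x.2
  have hcond : 1 ≤ 1 ∧ 1 < x.1 ∧ x.1 ≤ n := by omega
  show ψ n (QuotientGroup.mk (cactusσ n 1 x.1)) = PresentedGroup.of x
  rw [ψ_mk, cactusσ, dif_pos hcond, ψ₁_of]
  show Xg n x.1 * Xg n (x.1 - 1 + 1) * Xg n x.1 = PresentedGroup.of x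
  have e1 : x.1 - 1 + 1 = x.1 := by omega
  rw [e1, q_sq, one_mul, Xg_of x.2]

private lemma comp2 (n : ℕ) : (φh n).comp (ψ n) = MonoidHom.id _ := by
  apply QuotientGroup.monoidHom_ext
  refine PresentedGroup.ext fun x => ?_
  have hx := x.2
  simp only [MonoidHom.comp_apply, MonoidHom.id_apply]
  show φh n (ψ n (QuotientGroup.mk (PresentedGroup.of x))) = QuotientGroup.mk (PresentedGroup.of x)
  rw [ψ_mk, ψ₁_of]
  show φh n (Xg n x.1.2 * Xg n (x.1.2 - x.1.1 + 1) * Xg n x.1.2) = _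
  rw [map_mul, map_mul, φh_Xg (by omega : 2 ≤ x.1.2 ∧ x.1.2 ≤ n),
    φh_Xg (by omega : 2 ≤ x.1.2 - x.1.1 + 1 ∧ x.1.2 - x.1.1 + 1 ≤ n)]
  show tH n x.1.2 * tH n (x.1.2 - x.1.1 + 1) * tH n x.1.2 =
    QuotientGroup.mk (PresentedGroup.of x)
  have h1 : tH n x.1.2 * tH n (x.1.2 - x.1.1 + 1) * tH n x.1.2 = sH n x.1.1 x.1.2 :=
    (h_sub (by omega) (by omega) (by omega)).symm
  have h2 : cactusσ n x.1.1 x.1.2 = PresentedGroup.of x := by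
    rw [cactusσ, dif_pos ⟨hx.1, hx.2.1, hx.2.2⟩]
  rw [h1]
  exact congrArg QuotientGroup.mk h2

end Maps

/-- For every `n ≥ 3`, the quotient `J_n/Γ₃(J_n)` is isomorphic to the group presented by
generators `x_2, …, x_n` and the relators `cactusModGamma3Rels n`, via an isomorphism
sending `x_i` to the class of `σ_{1,i}`. Here `Γ₃(J_n) = (⊤ : Subgroup (CactusGroup n)).lowerCentralSeries 2`. -/
theorem cactus_mod_gamma3_presentation (n : ℕ) (hn : 3 ≤ n) :
    ∃ e : PresentedGroup (cactusModGamma3Rels n) ≃*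
        (CactusGroup n ⧸ (⊤ : Subgroup (CactusGroup n)).lowerCentralSeries 2),
      ∀ (i : ℕ) (h : 2 ≤ i ∧ i ≤ n),
        e (PresentedGroup.of ⟨i, h⟩) = QuotientGroup.mk (cactusσ n 1 i) := by
  refine ⟨{ toFun := φh n, invFun := ψ n,
            left_inv := fun x => DFunLike.congr_fun (comp1 n) x,
            right_inv := fun x => DFunLike.congr_fun (comp2 n) x,
            map_mul' := map_mul (φh n) }, fun i h => ?_⟩
  show φh n (PresentedGroup.of ⟨i, h⟩) = QuotientGroup.mk (cactusσ n 1 i)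
  rw [φh_of]
  rfl
end
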